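/- M_P is the least infinite-valued model of P with respect to ⊑_∞: for every infinite-valued model N of P, M_P ⊑_∞ N. Consequently, M_P is also the least fixpoint of T_P with respect to ⊑_∞. -/

import Mathlib

open Ordinal Set

noncomputable section
attribute [local instance] Classical.propDecidable

namespace IVS

/-- Countable ordinals: ordinals below `ω₁`. -/
abbrev Ord1 := {o : Ordinal.{0} // o < ω₁}

theorem zero_lt_omega1 : (0 : Ordinal) < ω₁ := omega_pos 1

theorem succ_lt_omega1 {o : Ordinal} (h : o < ω₁) : o + 1 < ω₁ := by
  have := (Cardinal.isSuccLimit_omega 1).succ_lt h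
  rwa [Order.succ_eq_add_one] at this

theorem Ordinal.zero_le (o : Ordinal) : 0 ≤ o := _root_.zero_le

theorem Ordinal.not_lt_zero (o : Ordinal) : ¬ o < 0 := by simp

theorem Ordinal.le_add_right (a b : Ordinal) : a ≤ a + b := le_self_add

/-- zero as a countable ordinal -/
def O0 : Ord1 := ⟨0, zero_lt_omega1⟩

/-- successor on countable ordinals -/
def Ord1.succ (a : Ord1) : Ord1 := ⟨a.1 + 1, succ_lt_omega1 a.2⟩

/-- The truth domain `V`: `F_α < ⋯ < 0 < ⋯ < T_α` realized as a lexicographic sum. -/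
abbrev TV := Ord1 ⊕ₗ (Unit ⊕ₗ Ord1ᵒᵈ)

/-- the false value `F_α` -/
def TV.F (a : Ord1) : TV := toLex (Sum.inl a)
/-- the middle value `0` -/
def TV.Z : TV := toLex (Sum.inr (toLex (Sum.inl ())))
/-- the true value `T_α` -/
def TV.T (a : Ord1) : TV := toLex (Sum.inr (toLex (Sum.inr (OrderDual.toDual a))))

/-- the order of a truth value (`⊤` codes `+∞`, the order of `0`) -/
def ordOf (v : TV) : WithTop Ordinal :=
  match ofLex v with
  | .inl a => (a.1 : Ordinal)
  | .inr b =>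
    match ofLex b with
    | .inl _ => ⊤
    | .inr a => ((OrderDual.ofDual a).1 : Ordinal)

/-- negation-as-failure: `¬F_α = T_{α+1}`, `¬T_α = F_{α+1}`, `¬0 = 0`. -/
def negv (v : TV) : TV :=
  match ofLex v with
  | .inl a => TV.T a.succ
  | .inr b =>
    match ofLex b with
    | .inl _ => TV.Z
    | .inr a => TV.F (OrderDual.ofDual a).succ

/-- Literals of a propositional normal program (atoms are natural numbers). -/
inductive Lit where
  | pos (n : ℕ)
  | neg (n : ℕ)
  | tt
  | ff

/-- A normal program clause: a head atom and a body which is a conjunction of literals. -/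
structure Clause where
  head : ℕ
  body : List Lit

/-- A (possibly infinite) propositional normal logic program. -/
abbrev Program := Set Clause

/-- Infinite-valued interpretations. -/
abbrev Interp := ℕ → TV

/-- the interpretation assigning `F₀` to every atom (denoted `∅` in the paper) -/
def botI : Interp := fun _ => TV.F O0

def evalLit (I : Interp) : Lit → TV
  | .pos n => I n
  | .neg n => negv (I n)
  | .tt => TV.T O0
  | .ff => TV.F O0

/-- value of a body (conjunction evaluated by `min`; empty conjunction is `T₀`) -/
def evalBody (I : Interp) (b : List Lit) : TV :=
  (b.map (evalLit I)).foldr min (TV.T O0)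

/-- least upper bound in `V` (well-defined by the lub-existence theorem) -/
def lub (S : Set TV) : TV := if h : ∃ v, IsLUB S v then h.choose else TV.Z

/-- the immediate consequence operator -/
def TP (P : Program) (I : Interp) : Interp :=
  fun p => lub {v | ∃ c ∈ P, c.head = p ∧ evalBody I c.body = v}

/-- `I` is an (infinite-valued) model of `P` -/
def isModel (P : Program) (I : Interp) : Prop :=
  ∀ c ∈ P, evalBody I c.body ≤ I c.head

/-- the level set `I ∥ v` -/
def level (I : Interp) (v : TV) : Set ℕ := {p | I p = v}

/-- `I =_α J` -/
def eqA (α : Ord1) (I J : Interp) : Prop :=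
  ∀ β ≤ α, level I (TV.T β) = level J (TV.T β) ∧ level I (TV.F β) = level J (TV.F β)

/-- `I ⊏_α J` -/
def sqltA (α : Ord1) (I J : Interp) : Prop :=
  (∀ β < α, eqA β I J) ∧
    ((level I (TV.T α) ⊂ level J (TV.T α) ∧ level J (TV.F α) ⊆ level I (TV.F α)) ∨
     (level I (TV.T α) ⊆ level J (TV.T α) ∧ level J (TV.F α) ⊂ level I (TV.F α)))

/-- `I ⊑_α J` -/
def sqleA (α : Ord1) (I J : Interp) : Prop := eqA α I J ∨ sqltA α I J

/-- `I ⊏_∞ J` -/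
def sqltInf (I J : Interp) : Prop := ∃ α : Ord1, sqltA α I J

/-- `I ⊑_∞ J` -/
def sqleInf (I J : Interp) : Prop := I = J ∨ sqltInf I J

/-- the sequence `T_P^n(I)` is an `α`-chain -/
def isChainA (P : Program) (α : Ord1) (I : Interp) : Prop :=
  ∀ n : ℕ, sqleA α ((TP P)^[n] I) ((TP P)^[n + 1] I)

/-- the interpretation `T_{P,α}^ω(I)` -/
def TPomega (P : Program) (α : Ord1) (I : Interp) : Interp := fun p =>
  if ordOf (I p) < (α.1 : WithTop Ordinal) then I p
  else if ∃ n : ℕ, (TP P)^[n] I p = TV.T α then TV.T α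
  else if ∀ n : ℕ, (TP P)^[n] I p = TV.F α then TV.F α
  else TV.F α.succ

/-- `⊔_{β<α} M_β` for a family defined below `α` -/
def sqcupI (α : Ord1) (f : ∀ β : Ordinal, β < α.1 → Interp) : Interp := fun p =>
  if h : ∃ β : Ordinal, ∃ hb : β < α.1, ordOf (f β hb p) = (β : WithTop Ordinal)
  then f h.choose h.choose_spec.choose p
  else TV.F α

/-- the approximations `M_α` to the minimum model (junk values for `α ≥ ω₁`) -/
def MA (P : Program) (o : Ordinal) : Interp :=
  Ordinal.limitRecOn o
    (TPomega P O0 botI)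
    (fun o' ih => if h : o' + 1 < ω₁ then TPomega P ⟨o' + 1, h⟩ ih else ih)
    (fun o' _ ih =>
      if h : o' < ω₁ then TPomega P ⟨o', h⟩ (sqcupI ⟨o', h⟩ ih) else botI)

/-- `M_α` for a countable ordinal `α` -/
def Mα (P : Program) (α : Ord1) : Interp := MA P α.1

/-- the defining property of the depth `δ` of a program -/
def isDepth (P : Program) (δ : Ord1) : Prop :=
  (level (Mα P δ) (TV.T δ) = ∅ ∧ level (Mα P δ) (TV.F δ) = ∅) ∧
    ∀ β : Ord1, β < δ →
      (level (Mα P β) (TV.T β) ≠ ∅ ∨ level (Mα P β) (TV.F β) ≠ ∅)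

/-- the depth of a program -/
def depth (P : Program) : Ord1 :=
  if h : ∃ δ : Ord1, isDepth P δ then h.choose else O0

/-- the minimum model `M_P` -/
def MP (P : Program) : Interp := fun p =>
  if ordOf (Mα P (depth P) p) < ((depth P).1 : WithTop Ordinal)
  then Mα P (depth P) p else TV.Z

/-- the set of all infinite-valued models of `P` -/
def models (P : Program) : Set Interp := {I | isModel P I}

/-- `M ♯ α`: the part of `M` consisting of values of order `α` -/
def sharp (I : Interp) (α : Ord1) : Set (ℕ × TV) :=
  {pv | I pv.1 = pv.2 ∧ ordOf pv.2 = (α.1 : WithTop Ordinal)}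

/-- `⨀^α S = ⋀^α S ∪ ⋁^α S` -/
def odot (α : Ord1) (S : Set Interp) : Set (ℕ × TV) :=
  {pv | (∃ p : ℕ, pv = (p, TV.T α) ∧ ∀ M ∈ S, M p = TV.T α) ∨
        (∃ p : ℕ, pv = (p, TV.F α) ∧ ∃ M ∈ S, M p = TV.F α)}

/-- the sets `S_α` of the model intersection construction (junk for `α ≥ ω₁`) -/
def SA (P : Program) (o : Ordinal) : Set Interp :=
  Ordinal.limitRecOn o
    {M ∈ models P | sharp M O0 = odot O0 (models P)}
    (fun o' ih =>
      if h : o' + 1 < ω₁ then {M ∈ ih | sharp M ⟨o' + 1, h⟩ = odot ⟨o' + 1, h⟩ ih} else ih)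
    (fun o' _ ih =>
      if h : o' < ω₁ then
        {M : Interp | M ∈ (⋂ (b : Ordinal) (hb : b < o'), ih b hb) ∧
          sharp M ⟨o', h⟩ = odot ⟨o', h⟩ (⋂ (b : Ordinal) (hb : b < o'), ih b hb)}
      else ∅)

-- ===== TV basics =====
lemma TV.casesOn' (v : TV) : (∃ β, v = TV.F β) ∨ v = TV.Z ∨ ∃ β, v = TV.T β := by
  rcases v with a | b
  · exact Or.inl ⟨a, rfl⟩
  · rcases b with u | c
    · exact Or.inr (Or.inl rfl)
    · exact Or.inr (Or.inr ⟨c, rfl⟩)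

@[simp] lemma F_le_F {a b : Ord1} : TV.F a ≤ TV.F b ↔ a ≤ b := Sum.Lex.inl_le_inl_iff
@[simp] lemma T_le_T {a b : Ord1} : TV.T a ≤ TV.T b ↔ b ≤ a := by
  show toLex (Sum.inr _) ≤ toLex (Sum.inr _) ↔ _
  rw [Sum.Lex.inr_le_inr_iff]
  exact Sum.Lex.inr_le_inr_iff
@[simp] lemma F_lt_Z {a : Ord1} : TV.F a < TV.Z := Sum.Lex.inl_lt_inr _ _
@[simp] lemma Z_lt_T {a : Ord1} : TV.Z < TV.T a := by
  have : toLex (Sum.inr (toLex (Sum.inl ()))) < (toLex (Sum.inr (toLex (Sum.inr (OrderDual.toDual a)))) : TV) := by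
    rw [Sum.Lex.inr_lt_inr_iff]; exact Sum.Lex.inl_lt_inr _ _
  exact this
@[simp] lemma F_lt_T {a b : Ord1} : TV.F a < TV.T b := Sum.Lex.inl_lt_inr _ _
@[simp] lemma F_lt_F {a b : Ord1} : TV.F a < TV.F b ↔ a < b := Sum.Lex.inl_lt_inl_iff
@[simp] lemma T_lt_T {a b : Ord1} : TV.T a < TV.T b ↔ b < a := by
  show toLex (Sum.inr _) < toLex (Sum.inr _) ↔ _
  rw [Sum.Lex.inr_lt_inr_iff]
  exact Sum.Lex.inr_lt_inr_iff
@[simp] lemma F_le_Z {a : Ord1} : TV.F a ≤ TV.Z := F_lt_Z.le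
@[simp] lemma Z_le_T {a : Ord1} : TV.Z ≤ TV.T a := Z_lt_T.le
@[simp] lemma F_le_T {a b : Ord1} : TV.F a ≤ TV.T b := F_lt_T.le
@[simp] lemma not_T_le_Z {a : Ord1} : ¬ TV.T a ≤ TV.Z := not_le_of_gt Z_lt_T
@[simp] lemma not_T_le_F {a b : Ord1} : ¬ TV.T a ≤ TV.F b := not_le_of_gt F_lt_T
@[simp] lemma not_Z_le_F {a : Ord1} : ¬ TV.Z ≤ TV.F a := not_le_of_gt F_lt_Z
@[simp] lemma F_ne_Z {a : Ord1} : TV.F a ≠ TV.Z := ne_of_lt F_lt_Z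
@[simp] lemma F_ne_T {a b : Ord1} : TV.F a ≠ TV.T b := ne_of_lt F_lt_T
@[simp] lemma Z_ne_T {a : Ord1} : TV.Z ≠ TV.T a := ne_of_lt Z_lt_T
@[simp] lemma F_inj {a b : Ord1} : TV.F a = TV.F b ↔ a = b := by
  constructor
  · intro h; exact le_antisymm (F_le_F.1 h.le) (F_le_F.1 h.ge)
  · rintro rfl; rfl
@[simp] lemma T_inj {a b : Ord1} : TV.T a = TV.T b ↔ a = b := by
  constructor
  · intro h; exact le_antisymm (T_le_T.1 h.ge) (T_le_T.1 h.le)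
  · rintro rfl; rfl

@[simp] lemma ordOf_F (a : Ord1) : ordOf (TV.F a) = (a.1 : WithTop Ordinal) := rfl
@[simp] lemma ordOf_T (a : Ord1) : ordOf (TV.T a) = (a.1 : WithTop Ordinal) := rfl
@[simp] lemma ordOf_Z : ordOf TV.Z = ⊤ := rfl
@[simp] lemma negv_F (a : Ord1) : negv (TV.F a) = TV.T a.succ := rfl
@[simp] lemma negv_T (a : Ord1) : negv (TV.T a) = TV.F a.succ := rfl
@[simp] lemma negv_Z : negv TV.Z = TV.Z := rfl

lemma le_T0 (v : TV) : v ≤ TV.T O0 := by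
  rcases TV.casesOn' v with ⟨b, rfl⟩ | rfl | ⟨b, rfl⟩
  · simp
  · simp
  · simp [T_le_T]; exact Ordinal.zero_le _
lemma F0_le (v : TV) : TV.F O0 ≤ v := by
  rcases TV.casesOn' v with ⟨b, rfl⟩ | rfl | ⟨b, rfl⟩
  · simp [F_le_F]; exact Ordinal.zero_le _
  · simp
  · simp

-- ===== value classification =====
lemma le_F_iff {v : TV} {a : Ord1} : v ≤ TV.F a ↔ ∃ b ≤ a, v = TV.F b := by
  constructor
  · intro h
    rcases TV.casesOn' v with ⟨b, rfl⟩ | rfl | ⟨b, rfl⟩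
    · exact ⟨b, F_le_F.1 h, rfl⟩
    · exact absurd h not_Z_le_F
    · exact absurd h not_T_le_F
  · rintro ⟨b, hb, rfl⟩; exact F_le_F.2 hb

lemma T_le_iff {v : TV} {a : Ord1} : TV.T a ≤ v ↔ ∃ b ≤ a, v = TV.T b := by
  constructor
  · intro h
    rcases TV.casesOn' v with ⟨b, rfl⟩ | rfl | ⟨b, rfl⟩
    · exact absurd h not_T_le_F
    · exact absurd h not_T_le_Z
    · exact ⟨b, T_le_T.1 h, rfl⟩
  · rintro ⟨b, hb, rfl⟩; exact T_le_T.2 hb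

abbrev oLT (v : TV) (a : Ord1) : Prop := ordOf v < (a.1 : WithTop Ordinal)

lemma oLT_iff {v : TV} {a : Ord1} : oLT v a ↔ ∃ b < a, v = TV.F b ∨ v = TV.T b := by
  constructor
  · intro h
    rcases TV.casesOn' v with ⟨b, rfl⟩ | rfl | ⟨b, rfl⟩
    · exact ⟨b, by exact_mod_cast (by simpa using h), Or.inl rfl⟩
    · simp [oLT] at h
    · exact ⟨b, by exact_mod_cast (by simpa using h), Or.inr rfl⟩
  · rintro ⟨b, hb, rfl | rfl⟩ <;> simpa [oLT] using (show b.1 < a.1 from hb)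

lemma not_oLT_F_self {a : Ord1} : ¬ oLT (TV.F a) a := by simp [oLT]
lemma not_oLT_T_self {a : Ord1} : ¬ oLT (TV.T a) a := by simp [oLT]
lemma oLT_of_lt {v : TV} {a b : Ord1} (h : oLT v a) (hab : a ≤ b) : oLT v b :=
  lt_of_lt_of_le h (by exact_mod_cast (show a.1 ≤ b.1 from hab))

/-- values with order not < α are ≥ F α -/
lemma F_le_of_not_oLT {v : TV} {a : Ord1} (h : ¬ oLT v a) : TV.F a ≤ v := by
  rcases TV.casesOn' v with ⟨b, rfl⟩ | rfl | ⟨b, rfl⟩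
  · refine F_le_F.2 ?_
    by_contra hb
    exact h (oLT_iff.2 ⟨b, lt_of_not_ge hb, Or.inl rfl⟩)
  · simp
  · simp

lemma eq_F_of_le_not_oLT {v : TV} {a : Ord1} (h : v ≤ TV.F a) (h2 : ¬ oLT v a) : v = TV.F a :=
  le_antisymm h (F_le_of_not_oLT h2)

lemma eq_T_of_le_not_oLT {v : TV} {a : Ord1} (h : TV.T a ≤ v) (h2 : ¬ oLT v a) : v = TV.T a := by
  rcases T_le_iff.1 h with ⟨b, hb, rfl⟩
  rcases lt_or_eq_of_le hb with hlt | rfl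
  · exact absurd (oLT_iff.2 ⟨b, hlt, Or.inr rfl⟩) h2
  · rfl

lemma Ord1.lt_succ_self (a : Ord1) : a < a.succ := by
  show a.1 < a.1 + 1
  rw [Ordinal.add_one_eq_succ]; exact Order.lt_succ _

lemma Ord1.lt_succ_iff {a b : Ord1} : a < b.succ ↔ a ≤ b := by
  show a.1 < b.1 + 1 ↔ a.1 ≤ b.1
  rw [Ordinal.add_one_eq_succ]; exact Order.lt_succ_iff

lemma Ord1.succ_le_iff {a b : Ord1} : a.succ ≤ b ↔ a < b := by
  show a.1 + 1 ≤ b.1 ↔ a.1 < b.1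
  rw [Ordinal.add_one_eq_succ]; exact Order.succ_le_iff

-- ===== lub existence and API =====
lemma exists_isLUB (S : Set TV) : ∃ v, IsLUB S v := by
  by_cases hT : ∃ a : Ord1, TV.T a ∈ S
  · obtain ⟨a0, ha0⟩ := hT
    set O : Set Ordinal := {o : Ordinal | ∃ h : o < ω₁, TV.T ⟨o, h⟩ ∈ S} with hO
    have hO0 : a0.1 ∈ O := ⟨a0.2, by simpa using ha0⟩
    obtain ⟨m, hm, hmin⟩ := Ordinal.lt_wf.has_min O ⟨a0.1, hO0⟩
    obtain ⟨hmlt, hmem⟩ := hm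
    refine ⟨TV.T ⟨m, hmlt⟩, ?_, ?_⟩
    · rintro v hv
      rcases TV.casesOn' v with ⟨b, rfl⟩ | rfl | ⟨b, rfl⟩
      · simp
      · simp
      · refine T_le_T.2 ?_
        show m ≤ b.1
        exact le_of_not_gt (hmin b.1 ⟨b.2, by simpa using hv⟩)
    · intro w hw; exact hw hmem
  · by_cases hZ : TV.Z ∈ S
    · refine ⟨TV.Z, ?_, fun w hw => hw hZ⟩
      rintro v hv
      rcases TV.casesOn' v with ⟨b, rfl⟩ | rfl | ⟨b, rfl⟩
      · simp
      · simp
      · exact absurd ⟨b, hv⟩ hT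
    · -- S consists of F's only
      have hF : ∀ v ∈ S, ∃ b : Ord1, v = TV.F b := by
        intro v hv
        rcases TV.casesOn' v with ⟨b, rfl⟩ | rfl | ⟨b, rfl⟩
        · exact ⟨b, rfl⟩
        · exact absurd hv hZ
        · exact absurd ⟨b, hv⟩ hT
      rcases Set.eq_empty_or_nonempty S with rfl | ⟨v0, hv0⟩
      · exact ⟨TV.F O0, by simp [IsLUB, IsLeast, upperBounds, lowerBounds],
          fun w hw => F0_le w⟩
      · set A : Set Ordinal := {o : Ordinal | ∃ h : o < ω₁, TV.F ⟨o, h⟩ ∈ S} with hA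
        obtain ⟨b0, rfl⟩ := hF v0 hv0
        have hA0 : b0.1 ∈ A := ⟨b0.2, by simpa using hv0⟩
        have hbdd : BddAbove A := ⟨ω₁, by rintro o ⟨ho, -⟩; exact ho.le⟩
        by_cases hs : sSup A < ω₁
        · refine ⟨TV.F ⟨sSup A, hs⟩, ?_, ?_⟩
          · intro v hv
            obtain ⟨b, rfl⟩ := hF v hv
            exact F_le_F.2 (le_csSup hbdd ⟨b.2, by simpa using hv⟩)
          · intro w hw
            rcases TV.casesOn' w with ⟨c, rfl⟩ | rfl | ⟨c, rfl⟩
            · refine F_le_F.2 ?_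
              refine csSup_le ⟨b0.1, hA0⟩ ?_
              rintro o ⟨ho, hoS⟩
              exact F_le_F.1 (hw hoS)
            · simp
            · simp
        · refine ⟨TV.Z, ?_, ?_⟩
          · intro v hv
            obtain ⟨b, rfl⟩ := hF v hv
            simp
          · intro w hw
            rcases TV.casesOn' w with ⟨c, rfl⟩ | rfl | ⟨c, rfl⟩
            · exfalso
              refine hs (lt_of_le_of_lt (csSup_le ⟨b0.1, hA0⟩ ?_) c.2)
              rintro o ⟨ho, hoS⟩
              exact F_le_F.1 (hw hoS)
            · simp
            · simp

lemma isLUB_lub (S : Set TV) : IsLUB S (lub S) := by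
  rw [lub, dif_pos (exists_isLUB S)]
  exact (exists_isLUB S).choose_spec

lemma le_lub {S : Set TV} {v : TV} (h : v ∈ S) : v ≤ lub S := (isLUB_lub S).1 h
lemma lub_le {S : Set TV} {w : TV} (h : ∀ v ∈ S, v ≤ w) : lub S ≤ w := (isLUB_lub S).2 h
lemma lub_eq_of_isLUB {S : Set TV} {v : TV} (h : IsLUB S v) : lub S = v :=
  (isLUB_lub S).unique h

/-- if the lub is at least `T a`, some element is at least `T a` -/
lemma exists_T_le_of_T_le_lub {S : Set TV} {a : Ord1} (h : TV.T a ≤ lub S) :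
    ∃ v ∈ S, TV.T a ≤ v := by
  by_contra hc
  push_neg at hc
  have : lub S ≤ TV.T a.succ := by
    refine lub_le fun v hv => ?_
    have hlt : v < TV.T a := hc v hv
    rcases TV.casesOn' v with ⟨b, rfl⟩ | rfl | ⟨b, rfl⟩
    · simp
    · simp
    · refine T_le_T.2 (Ord1.succ_le_iff.2 (T_lt_T.1 hlt))
  have := le_trans h this
  rw [T_le_T] at this
  exact absurd (lt_of_lt_of_le (Ord1.lt_succ_self a) this) (lt_irrefl a)

-- ===== body evaluation lemmas =====
@[simp] lemma evalBody_nil {I : Interp} : evalBody I [] = TV.T O0 := rfl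
@[simp] lemma evalBody_cons {I : Interp} {l : Lit} {b : List Lit} :
    evalBody I (l :: b) = evalLit I l ⊓ evalBody I b := rfl
@[simp] lemma evalLit_pos {I : Interp} {q : ℕ} : evalLit I (Lit.pos q) = I q := rfl
@[simp] lemma evalLit_neg {I : Interp} {q : ℕ} : evalLit I (Lit.neg q) = negv (I q) := rfl
@[simp] lemma evalLit_tt {I : Interp} : evalLit I Lit.tt = TV.T O0 := rfl
@[simp] lemma evalLit_ff {I : Interp} : evalLit I Lit.ff = TV.F O0 := rfl

lemma body_le_of_mem {I : Interp} {l : Lit} : ∀ {b : List Lit}, l ∈ b →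
    evalBody I b ≤ evalLit I l
  | l' :: bs, h => by
    rw [evalBody_cons]
    rcases List.mem_cons.1 h with rfl | h
    · exact inf_le_left
    · exact le_trans inf_le_right (body_le_of_mem h)

lemma le_body {I : Interp} {b : List Lit} {v : TV} (h : ∀ l ∈ b, v ≤ evalLit I l) :
    v ≤ evalBody I b := by
  induction b with
  | nil => exact le_T0 v
  | cons l' b ih =>
    rw [evalBody_cons]
    exact le_inf (h l' (List.mem_cons_self)) (ih fun l hl => h l (List.mem_cons_of_mem _ hl))

lemma body_attained {I : Interp} (b : List Lit) :
    evalBody I b = TV.T O0 ∨ ∃ l ∈ b, evalBody I b = evalLit I l := by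
  induction b with
  | nil => exact Or.inl rfl
  | cons l' b ih =>
    rw [evalBody_cons]
    rcases le_total (evalLit I l') (evalBody I b) with h | h
    · exact Or.inr ⟨l', List.mem_cons_self, inf_eq_left.2 h⟩
    · rw [inf_eq_right.2 h]
      rcases ih with h' | ⟨l, hl, h'⟩
      · exact Or.inl h'
      · exact Or.inr ⟨l, List.mem_cons_of_mem _ hl, h'⟩

lemma exists_lit_le {I : Interp} {b : List Lit} {v : TV} (h : evalBody I b ≤ v)
    (hv : v < TV.T O0) : ∃ l ∈ b, evalLit I l ≤ v := by
  rcases body_attained (I := I) b with h' | ⟨l, hl, h'⟩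
  · rw [h'] at h; exact absurd (lt_of_lt_of_le hv h) (lt_irrefl _)
  · exact ⟨l, hl, h'.symm.trans_le h⟩

-- ===== level agreement and transfer lemmas =====
/-- `I` and `J` have identical `T`/`F` level sets at all orders `< α` -/
def AGR (α : Ord1) (I J : Interp) : Prop :=
  ∀ β : Ord1, β < α → level I (TV.T β) = level J (TV.T β) ∧ level I (TV.F β) = level J (TV.F β)

lemma AGR.symm {α : Ord1} {I J : Interp} (h : AGR α I J) : AGR α J I :=
  fun β hβ => ⟨(h β hβ).1.symm, (h β hβ).2.symm⟩

lemma AGR.mono {α β : Ord1} {I J : Interp} (h : AGR α I J) (hβ : β ≤ α) : AGR β I J :=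
  fun γ hγ => h γ (lt_of_lt_of_le hγ hβ)

lemma AGR.T_eq {α β : Ord1} {I J : Interp} (h : AGR α I J) (hβ : β < α) {p : ℕ}
    (hp : I p = TV.T β) : J p = TV.T β := by
  have hl := (h β hβ).1
  have hm : p ∈ level I (TV.T β) := hp
  rw [hl] at hm; exact hm

lemma AGR.F_eq {α β : Ord1} {I J : Interp} (h : AGR α I J) (hβ : β < α) {p : ℕ}
    (hp : I p = TV.F β) : J p = TV.F β := by
  have hl := (h β hβ).2
  have hm : p ∈ level I (TV.F β) := hp
  rw [hl] at hm; exact hm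

/-- transfer of a literal value of order `< α` -/
lemma lit_transfer {α : Ord1} {I J : Interp} (h : AGR α I J) {l : Lit} {w : TV}
    (hw : evalLit I l = w) (ho : oLT w α) : evalLit J l = w := by
  rcases oLT_iff.1 ho with ⟨β, hβ, rfl | rfl⟩
  · -- w = F β
    cases l with
    | pos q => exact h.F_eq hβ hw
    | neg q =>
      rw [evalLit_neg] at hw ⊢
      rcases TV.casesOn' (I q) with ⟨c, hc⟩ | hc | ⟨c, hc⟩ <;> rw [hc] at hw <;>
        simp only [negv_F, negv_Z, negv_T] at hw
      · exact absurd hw F_ne_T.symm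
      · exact absurd hw F_ne_Z.symm
      · have hceq := F_inj.1 hw
        have hcα : c < α := lt_trans (hceq ▸ Ord1.lt_succ_self c) hβ
        rw [h.T_eq hcα hc, negv_T, hceq]
    | tt => rw [evalLit_tt] at hw; exact absurd hw F_ne_T.symm
    | ff => exact hw
  · -- w = T β
    cases l with
    | pos q => exact h.T_eq hβ hw
    | neg q =>
      rw [evalLit_neg] at hw ⊢
      rcases TV.casesOn' (I q) with ⟨c, hc⟩ | hc | ⟨c, hc⟩ <;> rw [hc] at hw <;>
        simp only [negv_F, negv_Z, negv_T] at hw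
      · have hceq := T_inj.1 hw
        have hcα : c < α := lt_trans (hceq ▸ Ord1.lt_succ_self c) hβ
        rw [h.F_eq hcα hc, negv_F, hceq]
      · exact absurd hw Z_ne_T
      · exact absurd hw F_ne_T
    | tt => exact hw
    | ff => rw [evalLit_ff] at hw; exact absurd hw F_ne_T

lemma lit_sync {α : Ord1} {I J : Interp} (h : AGR α I J) (l : Lit)
    (h1 : ¬ oLT (evalLit I l) α) : ¬ oLT (evalLit J l) α := by
  intro h2
  exact h1 (by rw [lit_transfer h.symm rfl h2]; exact h2)

lemma F_lt_of_not_oLT {v : TV} {β α : Ord1} (h : ¬ oLT v α) (hβ : β < α) : TV.F β < v :=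
  lt_of_lt_of_le (F_lt_F.2 hβ) (F_le_of_not_oLT h)

lemma T_lt_iff {a : Ord1} {v : TV} : TV.T a < v ↔ ∃ b, v = TV.T b ∧ b < a := by
  constructor
  · intro hlt
    rcases TV.casesOn' v with ⟨b, rfl⟩ | rfl | ⟨b, rfl⟩
    · exact absurd hlt (not_lt_of_ge F_le_T)
    · exact absurd hlt (not_lt_of_ge Z_le_T)
    · exact ⟨b, rfl, T_lt_T.1 hlt⟩
  · rintro ⟨b, rfl, hb⟩; exact T_lt_T.2 hb

/-- transfer of a body value of order `< α` -/
lemma body_transfer {α : Ord1} {I J : Interp} (h : AGR α I J) {b : List Lit} {v : TV}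
    (hb : evalBody I b = v) (ho : oLT v α) : evalBody J b = v := by
  rcases oLT_iff.1 ho with ⟨β, hβ, rfl | rfl⟩
  · -- F β
    obtain ⟨l, hl, hle⟩ : ∃ l ∈ b, evalLit I l = TV.F β := by
      rcases body_attained (I := I) b with h' | ⟨l, hl, h'⟩
      · rw [hb] at h'; exact absurd h' F_ne_T
      · exact ⟨l, hl, h'.symm.trans hb⟩
    have h1 : evalBody J b ≤ TV.F β := by
      rw [← lit_transfer h hle (by simp [oLT]; exact_mod_cast hβ)]
      exact body_le_of_mem hl
    refine le_antisymm h1 (le_body fun l' hl' => ?_)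
    have hIl : TV.F β ≤ evalLit I l' := hb ▸ body_le_of_mem hl'
    by_cases hcase : oLT (evalLit I l') α
    · rw [lit_transfer h rfl hcase]; exact hIl
    · exact (F_lt_of_not_oLT (lit_sync h l' hcase) hβ).le
  · -- T β
    have h2 : TV.T β ≤ evalBody J b := by
      refine le_body fun l' hl' => ?_
      have hIl : TV.T β ≤ evalLit I l' := hb ▸ body_le_of_mem hl'
      rcases T_le_iff.1 hIl with ⟨γ, hγ, hval⟩
      rw [lit_transfer h hval (by simp [oLT]; exact_mod_cast lt_of_le_of_lt hγ hβ)]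
      exact T_le_T.2 hγ
    rcases body_attained (I := I) b with h' | ⟨l, hl, h'⟩
    · rw [hb] at h'
      exact le_antisymm (by rw [h']; exact le_T0 _) h2
    · have : evalLit J l = TV.T β := lit_transfer h (h'.symm.trans hb) ho
      exact le_antisymm (this ▸ body_le_of_mem hl) h2

/-- KEY-T : truth of order `α` propagates -/
lemma keyT {α : Ord1} {I J : Interp} (h : AGR α I J) {b : List Lit}
    (hyp : ∀ q, Lit.pos q ∈ b → I q = TV.T α → TV.T α ≤ J q)
    (hb : TV.T α ≤ evalBody I b) : TV.T α ≤ evalBody J b := by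
  refine le_body fun l hl => ?_
  have hIl : TV.T α ≤ evalLit I l := le_trans hb (body_le_of_mem hl)
  cases l with
  | pos q =>
    rw [evalLit_pos] at hIl ⊢
    rcases T_le_iff.1 hIl with ⟨σ, hσ, hval⟩
    rcases lt_or_eq_of_le hσ with hlt | rfl
    · rw [h.T_eq hlt hval]; exact T_le_T.2 hσ
    · exact hyp q hl hval
  | neg q =>
    rw [evalLit_neg] at hIl ⊢
    rcases TV.casesOn' (I q) with ⟨c, hc⟩ | hc | ⟨c, hc⟩ <;> rw [hc] at hIl <;>
      simp only [negv_F, negv_Z, negv_T] at hIl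
    · have hcα : c < α := lt_of_lt_of_le (Ord1.lt_succ_self c) (T_le_T.1 hIl)
      rw [h.F_eq hcα hc, negv_F]
      exact hIl
    · exact absurd hIl not_T_le_Z
    · exact absurd hIl not_T_le_F
  | tt => exact le_T0 _
  | ff => exact absurd hIl not_T_le_F

/-- KEY-F : falsity of order `α` propagates (generalized form) -/
lemma keyF {δ α : Ord1} {N I' : Interp} (hδα : δ ≤ α) (h : AGR δ N I')
    (hemp : ∀ γ : Ord1, δ ≤ γ → γ < α → level N (TV.T γ) = ∅ ∧ level N (TV.F γ) = ∅)
    {b : List Lit}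
    (hyp : ∀ q, Lit.pos q ∈ b → N q = TV.F α → I' q ≤ TV.F δ)
    (hb : evalBody N b ≤ TV.F α) : evalBody I' b ≤ TV.F δ := by
  obtain ⟨l, hl, hle⟩ := exists_lit_le hb F_lt_T
  refine le_trans (body_le_of_mem hl) ?_
  cases l with
  | pos q =>
    rw [evalLit_pos] at hle ⊢
    rcases le_F_iff.1 hle with ⟨γ, hγ, hval⟩
    by_cases hγδ : γ < δ
    · rw [h.F_eq hγδ hval]; exact F_le_F.2 hγδ.le
    · rcases lt_or_eq_of_le hγ with hlt | rfl
      · exact absurd (show q ∈ level N (TV.F γ) from hval)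
          (by rw [(hemp γ (le_of_not_gt hγδ) hlt).2]; exact Set.notMem_empty q)
      · exact hyp q hl hval
  | neg q =>
    rw [evalLit_neg] at hle ⊢
    rcases TV.casesOn' (N q) with ⟨c, hc⟩ | hc | ⟨c, hc⟩ <;> rw [hc] at hle <;>
      simp only [negv_F, negv_Z, negv_T] at hle
    · exact absurd hle not_T_le_F
    · exact absurd hle not_Z_le_F
    · have hcα : c < α := lt_of_lt_of_le (Ord1.lt_succ_self c) (F_le_F.1 hle)
      by_cases hcδ : c < δ
      · rw [h.T_eq hcδ hc, negv_T]
        exact F_le_F.2 (Ord1.succ_le_iff.2 hcδ)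
      · exact absurd (show q ∈ level N (TV.T c) from hc)
          (by rw [(hemp c (le_of_not_gt hcδ) hcα).1]; exact Set.notMem_empty q)
  | tt => exact absurd hle not_T_le_F
  | ff => exact F_le_F.2 (show O0 ≤ δ from Ordinal.zero_le _)

-- ===== TP lemmas =====
lemma TP_eq_lub (P : Program) (I : Interp) (p : ℕ) :
    TP P I p = lub {v | ∃ c ∈ P, c.head = p ∧ evalBody I c.body = v} := rfl

lemma body_le_TP {P : Program} {I : Interp} {c : Clause} (hc : c ∈ P) {p : ℕ}
    (hh : c.head = p) : evalBody I c.body ≤ TP P I p :=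
  le_lub ⟨c, hc, hh, rfl⟩

lemma TP_le_of_bodies {P : Program} {I : Interp} {p : ℕ} {w : TV}
    (h : ∀ c ∈ P, c.head = p → evalBody I c.body ≤ w) : TP P I p ≤ w :=
  lub_le (by rintro v ⟨c, hc, hh, rfl⟩; exact h c hc hh)

/-- transfer of a `T_P` value of order `< α` -/
lemma TP_transfer {P : Program} {α : Ord1} {I J : Interp} (h : AGR α I J) {p : ℕ} {v : TV}
    (hv : TP P I p = v) (ho : oLT v α) : TP P J p = v := by
  rcases oLT_iff.1 ho with ⟨β, hβ, rfl | rfl⟩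
  · -- F β : the two sets of body values coincide
    have hset : {w | ∃ c ∈ P, c.head = p ∧ evalBody J c.body = w} =
        {w | ∃ c ∈ P, c.head = p ∧ evalBody I c.body = w} := by
      ext w
      constructor
      · rintro ⟨c, hc, hh, rfl⟩
        have hIc : evalBody I c.body ≤ TV.F β := hv ▸ body_le_TP hc hh
        rcases le_F_iff.1 hIc with ⟨γ, hγ, hval⟩
        rw [body_transfer h hval (by simp [oLT]; exact_mod_cast lt_of_le_of_lt hγ hβ)]
        exact ⟨c, hc, hh, hval⟩
      · rintro ⟨c, hc, hh, rfl⟩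
        have hIc : evalBody I c.body ≤ TV.F β := hv ▸ body_le_TP hc hh
        rcases le_F_iff.1 hIc with ⟨γ, hγ, hval⟩
        rw [hval]
        exact ⟨c, hc, hh,
          body_transfer h hval (by simp [oLT]; exact_mod_cast lt_of_le_of_lt hγ hβ)⟩
    rw [TP_eq_lub, hset, ← TP_eq_lub, hv]
  · -- T β
    have hTle : TV.T β ≤ TP P I p := hv.ge
    obtain ⟨w, hw, hwle⟩ := exists_T_le_of_T_le_lub (S := _) hTle
    have hwub : w ≤ TV.T β := hv ▸ le_lub hw
    have hweq : w = TV.T β := le_antisymm hwub hwle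
    obtain ⟨c, hc, hh, hbody⟩ := hw
    have hJc : evalBody J c.body = TV.T β := body_transfer h (hbody.trans hweq) ho
    refine le_antisymm ?_ (hJc ▸ body_le_TP hc hh)
    refine TP_le_of_bodies fun c' hc' hh' => ?_
    by_contra hgt
    rcases T_lt_iff.1 (lt_of_not_ge hgt) with ⟨γ, hval, hγβ⟩
    have : evalBody I c'.body = TV.T γ :=
      body_transfer h.symm hval (by simp [oLT]; exact_mod_cast lt_trans hγβ hβ)
    have h1 : evalBody I c'.body ≤ TV.T β := hv ▸ body_le_TP hc' hh'
    rw [this] at h1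
    exact absurd (T_le_T.1 h1) (not_le_of_gt hγβ)

lemma TP_not_oLT {P : Program} {α : Ord1} {I J : Interp} (h : AGR α I J) {p : ℕ}
    (h1 : ¬ oLT (TP P I p) α) : ¬ oLT (TP P J p) α := fun h2 =>
  h1 (by rw [TP_transfer h.symm rfl h2]; exact h2)

lemma isModel_iff {P : Program} {I : Interp} : isModel P I ↔ ∀ p, TP P I p ≤ I p := by
  constructor
  · intro h p
    exact TP_le_of_bodies fun c hc hh => hh ▸ h c hc
  · intro h c hc
    exact le_trans (body_le_TP hc rfl) (h c.head)

lemma isModel_of_fixpoint {P : Program} {I : Interp} (h : TP P I = I) : isModel P I :=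
  isModel_iff.2 fun p => (congrFun h p).le

lemma AGR.trans {α : Ord1} {I J K : Interp} (h1 : AGR α I J) (h2 : AGR α J K) : AGR α I K :=
  fun β hβ => ⟨(h1 β hβ).1.trans (h2 β hβ).1, (h1 β hβ).2.trans (h2 β hβ).2⟩

-- ===== stage invariant =====
/-- the input invariant at stage `α` -/
def Inp (P : Program) (α : Ord1) (I : Interp) : Prop :=
  (∀ p, oLT (I p) α ∨ I p = TV.F α) ∧
  (∀ p, oLT (I p) α → TP P I p = I p) ∧
  (∀ p, I p = TV.F α → ¬ oLT (TP P I p) α)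

section Stage
variable {P : Program} {α : Ord1} {I : Interp} (hI : Inp P α I)

/-- an interpretation `J` has the same settled part as `I` and order `≥ α` elsewhere -/
def Sh (α : Ord1) (I J : Interp) : Prop :=
  (∀ p, oLT (I p) α → J p = I p) ∧ (∀ p, I p = TV.F α → ¬ oLT (J p) α)

lemma Sh.agr {α : Ord1} {I J : Interp} (hsh : Sh α I J)
    (hshape : ∀ p, oLT (I p) α ∨ I p = TV.F α) : AGR α I J := by
  intro β hβ
  constructor
  · ext p
    show I p = TV.T β ↔ J p = TV.T β
    constructor
    · intro hp
      rw [hsh.1 p (by rw [hp]; exact oLT_iff.2 ⟨β, hβ, Or.inr rfl⟩)]; exact hp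
    · intro hp
      rcases hshape p with hs | hu
      · rw [← hsh.1 p hs]; exact hp
      · exact absurd (by rw [hp]; exact oLT_iff.2 ⟨β, hβ, Or.inr rfl⟩) (hsh.2 p hu)
  · ext p
    show I p = TV.F β ↔ J p = TV.F β
    constructor
    · intro hp
      rw [hsh.1 p (by rw [hp]; exact oLT_iff.2 ⟨β, hβ, Or.inl rfl⟩)]; exact hp
    · intro hp
      rcases hshape p with hs | hu
      · rw [← hsh.1 p hs]; exact hp
      · exact absurd (by rw [hp]; exact oLT_iff.2 ⟨β, hβ, Or.inl rfl⟩) (hsh.2 p hu)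

/-- the iterates of `T_P` starting from a stage input keep the settled part -/
lemma iter_sh (hI : Inp P α I) : ∀ n, Sh α I ((TP P)^[n] I) := by
  intro n
  induction n with
  | zero => exact ⟨fun p _ => rfl, fun p hp => by rw [Function.iterate_zero_apply, hp]; exact not_oLT_F_self⟩
  | succ n ih =>
    have hagr : AGR α I ((TP P)^[n] I) := ih.agr hI.1
    constructor
    · intro p hp
      rw [Function.iterate_succ_apply']
      exact TP_transfer hagr (hI.2.1 p hp) hp
    · intro p hp
      rw [Function.iterate_succ_apply']
      exact TP_not_oLT hagr (hI.2.2 p hp)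

lemma iter_agr (hI : Inp P α I) (n : ℕ) : AGR α I ((TP P)^[n] I) := (iter_sh hI n).agr hI.1

lemma iter_agr2 (hI : Inp P α I) (n m : ℕ) :
    AGR α ((TP P)^[n] I) ((TP P)^[m] I) := (iter_agr hI n).symm.trans (iter_agr hI m)

lemma iter_unsettled (hI : Inp P α I) {n : ℕ} {p : ℕ} {v : TV} (hv : (TP P)^[n] I p = v)
    (hnv : ¬ oLT v α) : I p = TV.F α := by
  rcases hI.1 p with hs | hu
  · exact absurd (by rw [← ((iter_sh hI n).1 p hs), hv] at hs; exact hs) hnv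
  · exact hu

/-- true atoms of order `α` persist along the iteration -/
lemma chainT (hI : Inp P α I) : ∀ n p, (TP P)^[n] I p = TV.T α → (TP P)^[n+1] I p = TV.T α := by
  intro n
  induction n with
  | zero =>
    intro p hp
    rw [Function.iterate_zero_apply] at hp
    rcases hI.1 p with hs | hu
    · exact absurd (hp ▸ hs) not_oLT_T_self
    · rw [hp] at hu; exact absurd hu F_ne_T.symm
  | succ n ih =>
    intro p hp
    have hTle : TV.T α ≤ TP P ((TP P)^[n] I) p := by
      rw [← Function.iterate_succ_apply' (TP P) n I, hp]
    obtain ⟨w, hw, hwle⟩ := exists_T_le_of_T_le_lub (S := _) hTle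
    obtain ⟨c, hc, hh, hbody⟩ := hw
    have hkey : TV.T α ≤ evalBody ((TP P)^[n+1] I) c.body := by
      refine keyT (iter_agr2 hI n (n+1)) ?_ (hbody ▸ hwle)
      intro q _ hq
      exact (ih q hq).ge
    have h1 : TV.T α ≤ (TP P)^[n+2] I p := by
      rw [Function.iterate_succ_apply']
      exact le_trans hkey (body_le_TP hc hh)
    have hun : I p = TV.F α := by
      rcases hI.1 p with hs | hu
      · rw [(iter_sh hI (n+1)).1 p hs] at hp
        exact absurd (hp ▸ hs) not_oLT_T_self
      · exact hu
    exact eq_T_of_le_not_oLT h1 ((iter_sh hI (n+2)).2 p hun)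

/-- false atoms of order `α` propagate backwards along the iteration -/
lemma chainF (hI : Inp P α I) : ∀ n p, (TP P)^[n+1] I p = TV.F α → (TP P)^[n] I p = TV.F α := by
  intro n
  induction n with
  | zero =>
    intro p hp
    exact iter_unsettled hI hp not_oLT_F_self
  | succ n ih =>
    intro p hp
    have hun : I p = TV.F α := iter_unsettled hI hp not_oLT_F_self
    have hle : (TP P)^[n+1] I p ≤ TV.F α := by
      rw [Function.iterate_succ_apply']
      refine TP_le_of_bodies fun c hc hh => ?_
      have hb2 : evalBody ((TP P)^[n+1] I) c.body ≤ TV.F α := by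
        refine le_trans (body_le_TP hc hh) ?_
        rw [← Function.iterate_succ_apply' (TP P) (n+1) I, hp]
      exact keyF le_rfl (iter_agr2 hI (n+1) n)
        (fun γ h1 h2 => absurd (lt_of_le_of_lt h1 h2) (lt_irrefl _))
        (fun q _ hq => (ih q hq).le) hb2
    exact eq_F_of_le_not_oLT hle ((iter_sh hI (n+1)).2 p hun)

lemma chainT' (hI : Inp P α I) {n m : ℕ} (hnm : n ≤ m) {p : ℕ}
    (hp : (TP P)^[n] I p = TV.T α) : (TP P)^[m] I p = TV.T α := by
  induction m with
  | zero => exact (Nat.le_zero.1 hnm) ▸ hp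
  | succ m ih =>
    rcases Nat.lt_or_ge n (m+1) with h | h
    · exact chainT hI m p (ih (Nat.lt_succ_iff.1 h))
    · exact (le_antisymm hnm h) ▸ hp

lemma chainF' (hI : Inp P α I) {n m : ℕ} (hnm : n ≤ m) {p : ℕ}
    (hp : (TP P)^[m] I p = TV.F α) : (TP P)^[n] I p = TV.F α := by
  induction m with
  | zero => exact (Nat.le_zero.1 hnm) ▸ hp
  | succ m ih =>
    rcases Nat.lt_or_ge n (m+1) with h | h
    · exact ih (Nat.lt_succ_iff.1 h) (chainF hI m p hp)
    · exact (le_antisymm hnm h) ▸ hp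

end Stage

-- ===== TPomega lemmas =====
lemma TPomega_settled {P : Program} {α : Ord1} {I : Interp} {p : ℕ} (h : oLT (I p) α) :
    TPomega P α I p = I p := by
  rw [TPomega, if_pos h]

lemma TPomega_T {P : Program} {α : Ord1} {I : Interp} {p : ℕ} (h : ¬ oLT (I p) α)
    (h2 : ∃ n, (TP P)^[n] I p = TV.T α) : TPomega P α I p = TV.T α := by
  rw [TPomega, if_neg h, if_pos h2]

lemma TPomega_F {P : Program} {α : Ord1} {I : Interp} {p : ℕ} (h : ¬ oLT (I p) α)
    (h3 : ∀ n, (TP P)^[n] I p = TV.F α) : TPomega P α I p = TV.F α := by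
  have h2 : ¬ ∃ n, (TP P)^[n] I p = TV.T α := by
    rintro ⟨n, hn⟩
    rw [h3 n] at hn; exact F_ne_T hn
  rw [TPomega, if_neg h, if_neg h2, if_pos h3]

lemma TPomega_F' {P : Program} {α : Ord1} {I : Interp} {p : ℕ} (h : ¬ oLT (I p) α)
    (h2 : ¬ ∃ n, (TP P)^[n] I p = TV.T α) (h3 : ¬ ∀ n, (TP P)^[n] I p = TV.F α) :
    TPomega P α I p = TV.F α.succ := by
  rw [TPomega, if_neg h, if_neg h2, if_neg h3]

lemma TPomega_cases (P : Program) (α : Ord1) (I : Interp) (p : ℕ) :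
    (oLT (I p) α ∧ TPomega P α I p = I p) ∨
    (¬ oLT (I p) α ∧ ((∃ n, (TP P)^[n] I p = TV.T α) ∧ TPomega P α I p = TV.T α ∨
      (∀ n, (TP P)^[n] I p = TV.F α) ∧ TPomega P α I p = TV.F α ∨
      ((¬ ∃ n, (TP P)^[n] I p = TV.T α) ∧ (¬ ∀ n, (TP P)^[n] I p = TV.F α) ∧
        TPomega P α I p = TV.F α.succ))) := by
  by_cases h : oLT (I p) α
  · exact Or.inl ⟨h, TPomega_settled h⟩
  · refine Or.inr ⟨h, ?_⟩
    by_cases h2 : ∃ n, (TP P)^[n] I p = TV.T α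
    · exact Or.inl ⟨h2, TPomega_T h h2⟩
    · by_cases h3 : ∀ n, (TP P)^[n] I p = TV.F α
      · exact Or.inr (Or.inl ⟨h3, TPomega_F h h3⟩)
      · exact Or.inr (Or.inr ⟨h2, h3, TPomega_F' h h2 h3⟩)

lemma TPomega_shape {P : Program} {α : Ord1} {I : Interp}
    (hshape : ∀ p, oLT (I p) α ∨ I p = TV.F α) (p : ℕ) :
    oLT (TPomega P α I p) α.succ ∨ TPomega P α I p = TV.F α.succ := by
  have hαs : α < α.succ := Ord1.lt_succ_self α
  rcases TPomega_cases P α I p with ⟨hs, he⟩ | ⟨hu, hT | hF | hF'⟩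
  · exact Or.inl (he ▸ oLT_of_lt hs hαs.le)
  · exact Or.inl (hT.2 ▸ oLT_iff.2 ⟨α, hαs, Or.inr rfl⟩)
  · exact Or.inl (hF.2 ▸ oLT_iff.2 ⟨α, hαs, Or.inl rfl⟩)
  · exact Or.inr hF'.2.2

lemma TPomega_sh {P : Program} {α : Ord1} {I : Interp} : Sh α I (TPomega P α I) := by
  constructor
  · exact fun p hp => TPomega_settled hp
  · intro p hp
    have hu : ¬ oLT (I p) α := by rw [hp]; exact not_oLT_F_self
    rcases TPomega_cases P α I p with ⟨hs, _⟩ | ⟨_, hT | hF | hF'⟩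
    · exact absurd hs hu
    · rw [hT.2]; exact not_oLT_T_self
    · rw [hF.2]; exact not_oLT_F_self
    · rw [hF'.2.2]
      intro hlt
      exact absurd (lt_trans (show (α.1 : WithTop Ordinal) < α.succ.1 from by
        exact_mod_cast Ord1.lt_succ_self α) hlt) (lt_irrefl _)

lemma TPomega_agr {P : Program} {α : Ord1} {I : Interp}
    (hshape : ∀ p, oLT (I p) α ∨ I p = TV.F α) : AGR α I (TPomega P α I) :=
  TPomega_sh.agr hshape

-- ===== escape-time lemmas =====
section Stage2
variable {P : Program} {α : Ord1} {I : Interp}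

/-- threshold after which `T α` atoms of `TPomega` are `T α` in the iterates -/
lemma escT (hI : Inp P α I) (b : List Lit) :
    ∃ n, ∀ q, Lit.pos q ∈ b → TPomega P α I q = TV.T α → (TP P)^[n] I q = TV.T α := by
  induction b with
  | nil => exact ⟨0, fun q hq => absurd hq List.not_mem_nil⟩
  | cons l b ih =>
    obtain ⟨n, hn⟩ := ih
    cases l with
    | pos q0 =>
      by_cases hq0 : TPomega P α I q0 = TV.T α
      · have hex : ∃ k, (TP P)^[k] I q0 = TV.T α := by
          rcases TPomega_cases P α I q0 with ⟨hs, he⟩ | ⟨_, hT | hF | hF'⟩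
          · rw [he] at hq0; rw [hq0] at hs; exact absurd hs not_oLT_T_self
          · exact hT.1
          · rw [hF.2] at hq0; exact absurd hq0 F_ne_T
          · rw [hF'.2.2] at hq0; exact absurd hq0 F_ne_T
        obtain ⟨k, hk⟩ := hex
        refine ⟨max n k, fun q hq hTq => ?_⟩
        rcases List.mem_cons.1 hq with heq | hq
        · cases heq
          exact chainT' hI (le_max_right n k) hk
        · exact chainT' hI (le_max_left n k) (hn q hq hTq)
      · refine ⟨n, fun q hq hTq => ?_⟩
        rcases List.mem_cons.1 hq with heq | hq
        · cases heq; exact absurd hTq hq0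
        · exact hn q hq hTq
    | neg q0 => exact ⟨n, fun q hq hTq =>
        hn q ((List.mem_cons.1 hq).resolve_left fun h => Lit.noConfusion h) hTq⟩
    | tt => exact ⟨n, fun q hq hTq =>
        hn q ((List.mem_cons.1 hq).resolve_left fun h => Lit.noConfusion h) hTq⟩
    | ff => exact ⟨n, fun q hq hTq =>
        hn q ((List.mem_cons.1 hq).resolve_left fun h => Lit.noConfusion h) hTq⟩

/-- threshold after which iterate `F α` atoms must be `F α` in `TPomega` -/
lemma escF (hI : Inp P α I) (b : List Lit) :
    ∃ n, ∀ q, Lit.pos q ∈ b → (TP P)^[n] I q = TV.F α → TPomega P α I q = TV.F α := by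
  induction b with
  | nil => exact ⟨0, fun q hq => absurd hq List.not_mem_nil⟩
  | cons l b ih =>
    obtain ⟨n, hn⟩ := ih
    cases l with
    | pos q0 =>
      by_cases hq0 : TPomega P α I q0 = TV.F α
      · refine ⟨n, fun q hq hFq => ?_⟩
        rcases List.mem_cons.1 hq with heq | hq
        · cases heq; exact hq0
        · exact hn q hq hFq
      · -- find a time after which the iterate at q0 is never `F α`
        have hex : ∃ k, (TP P)^[k] I q0 ≠ TV.F α := by
          rcases TPomega_cases P α I q0 with ⟨hs, he⟩ | ⟨hu, hT | hF | hF'⟩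
          · refine ⟨0, fun hc => ?_⟩
            rw [Function.iterate_zero_apply] at hc
            rw [hc] at hs; exact absurd hs not_oLT_F_self
          · obtain ⟨k, hk⟩ := hT.1
            exact ⟨k, fun hc => F_ne_T (hc.symm.trans hk)⟩
          · exact absurd hF.2 hq0
          · obtain ⟨k, hk⟩ := not_forall.1 hF'.2.1
            exact ⟨k, hk⟩
        obtain ⟨k, hk⟩ := hex
        refine ⟨max n k, fun q hq hFq => ?_⟩
        rcases List.mem_cons.1 hq with heq | hq
        · cases heq
          exact absurd (chainF' hI (le_max_right n k) hFq) hk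
        · exact hn q hq (chainF' hI (le_max_left n k) hFq)
    | neg q0 => exact ⟨n, fun q hq hFq =>
        hn q ((List.mem_cons.1 hq).resolve_left fun h => Lit.noConfusion h) hFq⟩
    | tt => exact ⟨n, fun q hq hFq =>
        hn q ((List.mem_cons.1 hq).resolve_left fun h => Lit.noConfusion h) hFq⟩
    | ff => exact ⟨n, fun q hq hFq =>
        hn q ((List.mem_cons.1 hq).resolve_left fun h => Lit.noConfusion h) hFq⟩

end Stage2

-- ===== the fixpoint property of one stage =====
section StageFix
variable {P : Program} {α : Ord1} {I : Interp}

lemma TPomega_agr_iter (hI : Inp P α I) (n : ℕ) :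
    AGR α ((TP P)^[n] I) (TPomega P α I) :=
  (iter_agr hI n).symm.trans (TPomega_agr hI.1)

/-- `T_P` does not produce values of order `< α` at unsettled atoms of `TPomega` -/
lemma TP_TPomega_not_oLT (hI : Inp P α I) {p : ℕ} (hu : I p = TV.F α) :
    ¬ oLT (TP P (TPomega P α I) p) α :=
  TP_not_oLT (TPomega_agr hI.1) (hI.2.2 p hu)

lemma TP_TPomega_T (hI : Inp P α I) {p : ℕ} (hp : TPomega P α I p = TV.T α) :
    TP P (TPomega P α I) p = TV.T α := by
  have hu : I p = TV.F α := by
    rcases hI.1 p with hs | hu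
    · rw [TPomega_settled hs] at hp
      exact absurd (hp ▸ hs) not_oLT_T_self
    · exact hu
  obtain ⟨n, hn⟩ : ∃ n, (TP P)^[n] I p = TV.T α := by
    rcases TPomega_cases P α I p with ⟨hs, he⟩ | ⟨_, hT | hF | hF'⟩
    · rw [he] at hp; rw [hp] at hs; exact absurd hs not_oLT_T_self
    · exact hT.1
    · rw [hF.2] at hp; exact absurd hp F_ne_T
    · rw [hF'.2.2] at hp; exact absurd hp F_ne_T
  have hn1 : (TP P)^[n+1] I p = TV.T α := chainT hI n p hn
  -- extract a clause whose body evaluates to `T α` at time `n`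
  have hTle : TV.T α ≤ TP P ((TP P)^[n] I) p := by
    rw [← Function.iterate_succ_apply' (TP P) n I, hn1]
  obtain ⟨w, hw, hwle⟩ := exists_T_le_of_T_le_lub (S := _) hTle
  obtain ⟨c, hc, hh, hbody⟩ := hw
  have hkey : TV.T α ≤ evalBody (TPomega P α I) c.body := by
    refine keyT (TPomega_agr_iter hI n) ?_ (hbody ▸ hwle)
    intro q _ hq
    have huq : I q = TV.F α := by
      rcases hI.1 q with hs | hu'
      · rw [(iter_sh hI n).1 q hs] at hq
        exact absurd (hq ▸ hs) not_oLT_T_self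
      · exact hu'
    exact (TPomega_T (by rw [huq]; exact not_oLT_F_self) ⟨n, hq⟩).ge
  exact eq_T_of_le_not_oLT (le_trans hkey (body_le_TP hc hh)) (TP_TPomega_not_oLT hI hu)

lemma TP_TPomega_F (hI : Inp P α I) {p : ℕ} (hp : TPomega P α I p = TV.F α) :
    TP P (TPomega P α I) p = TV.F α := by
  have hu : I p = TV.F α := by
    rcases hI.1 p with hs | hu
    · rw [TPomega_settled hs] at hp
      exact absurd (hp ▸ hs) not_oLT_F_self
    · exact hu
  have hall : ∀ n, (TP P)^[n] I p = TV.F α := by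
    rcases TPomega_cases P α I p with ⟨hs, he⟩ | ⟨_, hT | hF | hF'⟩
    · rw [he] at hp; rw [hp] at hs; exact absurd hs not_oLT_F_self
    · rw [hT.2] at hp; exact absurd hp F_ne_T.symm
    · exact hF.1
    · rw [hF'.2.2] at hp
      have := F_inj.1 hp
      exact absurd (this ▸ Ord1.lt_succ_self α) (lt_irrefl _)
  refine eq_F_of_le_not_oLT ?_ (TP_TPomega_not_oLT hI hu)
  refine TP_le_of_bodies fun c hc hh => ?_
  obtain ⟨n, hn⟩ := escF hI c.body
  have hb2 : evalBody ((TP P)^[n] I) c.body ≤ TV.F α := by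
    refine le_trans (body_le_TP hc hh) ?_
    rw [← Function.iterate_succ_apply' (TP P) n I, hall (n+1)]
  exact keyF le_rfl (TPomega_agr_iter hI n)
    (fun γ h1 h2 => absurd (lt_of_le_of_lt h1 h2) (lt_irrefl _))
    (fun q hqb hq => by
      have hMq : TPomega P α I q = TV.F α := hn q hqb hq
      rw [hMq]) hb2

lemma TP_TPomega_F' (hI : Inp P α I) {p : ℕ} (hp : TPomega P α I p = TV.F α.succ) :
    ¬ oLT (TP P (TPomega P α I) p) α.succ := by
  have hu : I p = TV.F α := by
    rcases hI.1 p with hs | hu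
    · rw [TPomega_settled hs] at hp
      rw [hp] at hs
      exact absurd hs (by
        intro hlt
        exact absurd (lt_trans (show (α.1 : WithTop Ordinal) < α.succ.1 from by
          exact_mod_cast Ord1.lt_succ_self α) hlt) (lt_irrefl _))
    · exact hu
  have hcase : (¬ ∃ n, (TP P)^[n] I p = TV.T α) ∧ ¬ ∀ n, (TP P)^[n] I p = TV.F α := by
    rcases TPomega_cases P α I p with ⟨hs, he⟩ | ⟨_, hT | hF | hF'⟩
    · rw [hu] at hs; exact absurd hs not_oLT_F_self
    · rw [hT.2] at hp
      exact absurd hp F_ne_T.symm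
    · rw [hF.2] at hp
      exact absurd (F_inj.1 hp) (ne_of_lt (Ord1.lt_succ_self α))
    · exact ⟨hF'.1, hF'.2.1⟩
  intro hlt
  rcases oLT_iff.1 hlt with ⟨β, hβ, hval⟩
  have hβα : β ≤ α := Ord1.lt_succ_iff.1 hβ
  have hnotlt : ¬ oLT (TP P (TPomega P α I) p) α := TP_TPomega_not_oLT hI hu
  have hβeq : β = α := by
    rcases lt_or_eq_of_le hβα with hlt' | h
    · exact absurd (oLT_iff.2 ⟨β, hlt', hval⟩) hnotlt
    · exact h
  rw [hβeq] at hval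
  rcases hval with hFv | hTv
  · -- TP (TPomega) p = F α : show all iterates are F α, contradiction
    refine hcase.2 ?_
    intro n
    induction n with
    | zero => exact hu
    | succ n ih =>
      have hle : (TP P)^[n+1] I p ≤ TV.F α := by
        rw [Function.iterate_succ_apply']
        refine TP_le_of_bodies fun c hc hh => ?_
        have hbM : evalBody (TPomega P α I) c.body ≤ TV.F α := by
          refine le_trans (body_le_TP hc hh) ?_
          rw [hFv]
        exact keyF le_rfl (TPomega_agr_iter hI n).symm
          (fun γ h1 h2 => absurd (lt_of_le_of_lt h1 h2) (lt_irrefl _))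
          (fun q _ hq => by
            rcases TPomega_cases P α I q with ⟨hs, he⟩ | ⟨_, hT | hF | hF'⟩
            · rw [he] at hq; rw [hq] at hs; exact absurd hs not_oLT_F_self
            · rw [hT.2] at hq; exact absurd hq F_ne_T.symm
            · rw [hF.1 n]
            · rw [hF'.2.2] at hq
              have := F_inj.1 hq
              exact absurd (this ▸ Ord1.lt_succ_self α) (lt_irrefl _)) hbM
      exact eq_F_of_le_not_oLT hle ((iter_sh hI (n+1)).2 p hu)
  · -- TP (TPomega) p = T α : then some iterate reaches T α, contradiction
    refine hcase.1 ?_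
    have hTle : TV.T α ≤ TP P (TPomega P α I) p := hTv.ge
    obtain ⟨w, hw, hwle⟩ := exists_T_le_of_T_le_lub (S := _) hTle
    obtain ⟨c, hc, hh, hbody⟩ := hw
    obtain ⟨n, hn⟩ := escT hI c.body
    have hkey : TV.T α ≤ evalBody ((TP P)^[n] I) c.body := by
      refine keyT (TPomega_agr_iter hI n).symm ?_ (hbody ▸ hwle)
      intro q hqb hq
      exact (hn q hqb hq).ge
    have h1 : TV.T α ≤ (TP P)^[n+1] I p := by
      rw [Function.iterate_succ_apply']
      exact le_trans hkey (body_le_TP hc hh)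
    exact ⟨n+1, eq_T_of_le_not_oLT h1 ((iter_sh hI (n+1)).2 p hu)⟩

/-- the output of a stage is a valid input for the next stage -/
theorem stage_fix (hI : Inp P α I) : Inp P α.succ (TPomega P α I) := by
  refine ⟨TPomega_shape hI.1, ?_, ?_⟩
  · intro p hp
    rcases TPomega_cases P α I p with ⟨hs, he⟩ | ⟨hu, hT | hF | hF'⟩
    · rw [he]
      exact TP_transfer (TPomega_agr hI.1) (hI.2.1 p hs) hs
    · rw [hT.2]; exact TP_TPomega_T hI hT.2
    · rw [hF.2]; exact TP_TPomega_F hI hF.2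
    · rw [hF'.2.2] at hp
      exact absurd hp not_oLT_F_self
  · intro p hp
    exact TP_TPomega_F' hI hp

end StageFix

-- ===== the transfinite sequence of stage inputs =====
/-- the input interpretation for stage `o` -/
def inp (P : Program) (o : Ordinal.{0}) : Interp :=
  Ordinal.limitRecOn o botI
    (fun o' _ => MA P o')
    (fun o' _ _ => if h : o' < ω₁ then sqcupI ⟨o', h⟩ (fun β _ => MA P β) else botI)

@[simp] lemma inp_zero (P : Program) : inp P 0 = botI := Ordinal.limitRecOn_zero ..

lemma inp_succ (P : Program) (o : Ordinal.{0}) : inp P (o + 1) = MA P o := by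
  rw [inp, Ordinal.add_one_eq_succ, Ordinal.limitRecOn_succ]

lemma inp_limit (P : Program) {o : Ordinal.{0}} (hl : Order.IsSuccLimit o) (h : o < ω₁) :
    inp P o = sqcupI ⟨o, h⟩ (fun β _ => MA P β) := by
  rw [inp, Ordinal.limitRecOn_limit _ _ _ _ hl, dif_pos h]

lemma MA_zero (P : Program) : MA P 0 = TPomega P O0 botI := Ordinal.limitRecOn_zero ..

lemma MA_succ (P : Program) {o : Ordinal.{0}} (h : o + 1 < ω₁) :
    MA P (o + 1) = TPomega P ⟨o + 1, h⟩ (MA P o) := by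
  calc MA P (o + 1) = MA P (Order.succ o) := by rw [Ordinal.add_one_eq_succ]
    _ = if h' : o + 1 < ω₁ then TPomega P ⟨o + 1, h'⟩ (MA P o) else MA P o :=
        Ordinal.limitRecOn_succ ..
    _ = TPomega P ⟨o + 1, h⟩ (MA P o) := dif_pos h

lemma MA_limit (P : Program) {o : Ordinal.{0}} (hl : Order.IsSuccLimit o) (h : o < ω₁) :
    MA P o = TPomega P ⟨o, h⟩ (sqcupI ⟨o, h⟩ (fun β _ => MA P β)) := by
  rw [MA, Ordinal.limitRecOn_limit _ _ _ _ hl, dif_pos h]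
  rfl

lemma MA_eq (P : Program) {o : Ordinal.{0}} (h : o < ω₁) :
    MA P o = TPomega P ⟨o, h⟩ (inp P o) := by
  rcases Ordinal.zero_or_succ_or_isSuccLimit o with rfl | ⟨o', rfl⟩ | hl
  · rw [MA_zero, inp_zero]; rfl
  · have h' : o' + 1 < ω₁ := by rw [Ordinal.add_one_eq_succ]; exact h
    have e1 : MA P (Order.succ o') = MA P (o' + 1) := by rw [Ordinal.add_one_eq_succ]
    have e2 : inp P (Order.succ o') = inp P (o' + 1) := by rw [Ordinal.add_one_eq_succ]
    have e3 : (⟨Order.succ o', h⟩ : Ord1) = ⟨o' + 1, h'⟩ :=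
      Subtype.ext (Ordinal.add_one_eq_succ o').symm
    rw [e1, e2, e3, MA_succ P h', inp_succ]
  · rw [MA_limit P hl h, inp_limit P hl h]

lemma oLT_succ_iff {v : TV} {a : Ord1} : oLT v a.succ ↔ ordOf v ≤ (a.1 : WithTop Ordinal) := by
  rcases TV.casesOn' v with ⟨b, rfl⟩ | rfl | ⟨b, rfl⟩
  · show ((b.1 : WithTop Ordinal) < ((a.1 + 1 : Ordinal) : WithTop Ordinal)) ↔ _
    rw [ordOf_F, WithTop.coe_lt_coe, WithTop.coe_le_coe, Ordinal.add_one_eq_succ,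
      Order.lt_succ_iff]
  · simp [oLT]
  · show ((b.1 : WithTop Ordinal) < ((a.1 + 1 : Ordinal) : WithTop Ordinal)) ↔ _
    rw [ordOf_T, WithTop.coe_lt_coe, WithTop.coe_le_coe, Ordinal.add_one_eq_succ,
      Order.lt_succ_iff]

-- ===== coherence of the approximations =====
/-- persistence: settled values of earlier stages survive -/
def C1 (P : Program) (o : Ordinal.{0}) : Prop :=
  ∀ γ, γ < o → ∀ p, ordOf (MA P γ p) ≤ (γ : WithTop Ordinal) → MA P o p = MA P γ p

/-- origin: low-order values were already settled at their own stage -/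
def C2 (P : Program) (o : Ordinal.{0}) : Prop :=
  ∀ γ, γ < o → ∀ p, ordOf (MA P o p) ≤ (γ : WithTop Ordinal) →
    ordOf (MA P γ p) ≤ (γ : WithTop Ordinal)

lemma ordOf_le_exists {v : TV} {c : Ordinal.{0}} (h : ordOf v ≤ (c : WithTop Ordinal)) :
    ∃ σ, σ ≤ c ∧ ordOf v = (σ : WithTop Ordinal) := by
  rcases TV.casesOn' v with ⟨b, rfl⟩ | rfl | ⟨b, rfl⟩
  · exact ⟨b.1, by rw [ordOf_F] at h; exact_mod_cast h, rfl⟩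
  · rw [ordOf_Z] at h
    exact absurd h (by simp)
  · exact ⟨b.1, by rw [ordOf_T] at h; exact_mod_cast h, rfl⟩

theorem master (P : Program) :
    ∀ o : Ordinal.{0}, ∀ h : o < ω₁, Inp P ⟨o, h⟩ (inp P o) ∧ C1 P o ∧ C2 P o := by
  intro o
  induction o using Ordinal.induction with
  | h o IH =>
  intro h
  -- combined coherence helper from the IH
  have IHc : ∀ γ σ, σ ≤ γ → γ < o → ∀ p, ordOf (MA P γ p) ≤ (σ : WithTop Ordinal) →
      MA P γ p = MA P σ p ∧ ordOf (MA P σ p) = ordOf (MA P γ p) := by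
    intro γ σ hσγ hγ p hp
    rcases lt_or_eq_of_le hσγ with hlt | rfl
    · have hγω : γ < ω₁ := lt_trans hγ h
      obtain ⟨-, c1, c2⟩ := IH γ hγ hγω
      have h2 := c2 σ hlt p hp
      have h1 := c1 σ hlt p h2
      exact ⟨h1, by rw [h1]⟩
    · exact ⟨rfl, rfl⟩
  have hMAInp : ∀ σ, σ < o → ∀ hσω : σ < ω₁, Inp P (Ord1.succ ⟨σ, hσω⟩) (MA P σ) := by
    intro σ hσ hσω
    rw [MA_eq P hσω]
    exact stage_fix (IH σ hσ hσω).1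
  rcases Ordinal.zero_or_succ_or_isSuccLimit o with rfl | ⟨o', rfl⟩ | hl
  · -- zero
    refine ⟨⟨fun p => Or.inr (by rw [inp_zero]; rfl), fun p hp => ?_, fun p _ hlt => ?_⟩, ?_, ?_⟩
    · exact absurd hp (by simp [inp_zero, botI, oLT])
    · rcases oLT_iff.1 hlt with ⟨β, hβ, -⟩
      exact absurd (show β.1 < 0 from hβ) (Ordinal.not_lt_zero _)
    · exact fun γ hγ => absurd hγ (Ordinal.not_lt_zero _)
    · exact fun γ hγ => absurd hγ (Ordinal.not_lt_zero _)
  · -- successor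
    have h' : o' + 1 < ω₁ := by rw [Ordinal.add_one_eq_succ]; exact h
    have ho' : o' < ω₁ := lt_trans (Order.lt_succ o') h
    have hlt' : o' < Order.succ o' := Order.lt_succ o'
    have hInpS : Inp P (Ord1.succ ⟨o', ho'⟩) (MA P o') := hMAInp o' hlt' ho'
    have e3 : (⟨Order.succ o', h⟩ : Ord1) = Ord1.succ ⟨o', ho'⟩ :=
      Subtype.ext (Ordinal.add_one_eq_succ o').symm
    have einp : inp P (Order.succ o') = MA P o' := by
      rw [show Order.succ o' = o' + 1 from (Ordinal.add_one_eq_succ o').symm, inp_succ]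
    have eMA : MA P (Order.succ o') = TPomega P (Ord1.succ ⟨o', ho'⟩) (MA P o') := by
      rw [show Order.succ o' = o' + 1 from (Ordinal.add_one_eq_succ o').symm, MA_succ P h']
      rfl
    have hsucc_coe : ((o' : WithTop Ordinal)) < ((Order.succ o' : Ordinal) : WithTop Ordinal) :=
      WithTop.coe_lt_coe.2 (Order.lt_succ o')
    refine ⟨by rw [e3, einp]; exact hInpS, ?_, ?_⟩
    · -- C1
      intro γ hγ p hp
      have hγo' : γ ≤ o' := Order.lt_succ_iff.1 hγ
      have step1 : MA P o' p = MA P γ p := by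
        rcases lt_or_eq_of_le hγo' with hlt2 | rfl
        · exact (IH o' hlt' ho').2.1 γ hlt2 p hp
        · rfl
      have hset : oLT (MA P o' p) (Ord1.succ ⟨o', ho'⟩) := by
        rw [oLT_succ_iff, step1]
        exact le_trans hp (by exact_mod_cast hγo')
      rw [eMA, TPomega_settled hset, step1]
    · -- C2
      intro γ hγ p hp
      have hγo' : γ ≤ o' := Order.lt_succ_iff.1 hγ
      rcases hInpS.1 p with hs | hF
      · rw [eMA, TPomega_settled hs] at hp
        rcases lt_or_eq_of_le hγo' with hlt2 | rfl
        · exact ((IHc o' γ hγo' hlt' p hp).1 ▸ hp)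
        · exact hp
      · have hno : ¬ oLT (MA P (Order.succ o') p) (Ord1.succ ⟨o', ho'⟩) := by
          rw [eMA]
          exact TPomega_sh.2 p hF
        refine absurd ?_ hno
        rw [oLT_succ_iff]
        exact le_trans hp (by exact_mod_cast hγo')
  · -- limit
    have hinp : inp P o = sqcupI ⟨o, h⟩ (fun β _ => MA P β) := inp_limit P hl h
    have uniq : ∀ p β1 β2, β1 < o → β2 < o → ordOf (MA P β1 p) = (β1 : WithTop Ordinal) →
        ordOf (MA P β2 p) = (β2 : WithTop Ordinal) → β1 = β2 := by
      have key : ∀ p β1 β2, β1 < β2 → β2 < o → ordOf (MA P β1 p) = (β1 : WithTop Ordinal) →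
          ordOf (MA P β2 p) = (β2 : WithTop Ordinal) → False := by
        intro p β1 β2 h12 h2 e1 e2
        have := (IH β2 h2 (lt_trans h2 h)).2.1 β1 h12 p e1.le
        rw [this, e1] at e2
        exact absurd (WithTop.coe_inj.1 e2) (ne_of_lt h12)
      intro p β1 β2 h1 h2 e1 e2
      rcases lt_trichotomy β1 β2 with hc | hc | hc
      · exact absurd (key p β1 β2 hc h2 e1 e2) id
      · exact hc
      · exact absurd (key p β2 β1 hc h1 e2 e1) id
    have inp_desc : ∀ p β (hb : β < o), ordOf (MA P β p) = (β : WithTop Ordinal) →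
        inp P o p = MA P β p := by
      intro p β hb hord
      rw [hinp, sqcupI]
      have hex : ∃ β', ∃ hb' : β' < o, ordOf (MA P β' p) = (β' : WithTop Ordinal) := ⟨β, hb, hord⟩
      rw [dif_pos hex]
      have := hex.choose_spec.choose_spec
      have heq : hex.choose = β := uniq p _ _ hex.choose_spec.choose hb this hord
      exact heq ▸ rfl
    have inp_desc' : ∀ p, (¬ ∃ β, ∃ hb : β < o, ordOf (MA P β p) = (β : WithTop Ordinal)) →
        inp P o p = TV.F ⟨o, h⟩ := by
      intro p hnex
      rw [hinp, sqcupI, dif_neg hnex]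
    have inp_shape : ∀ p, oLT (inp P o p) ⟨o, h⟩ ∨ inp P o p = TV.F ⟨o, h⟩ := by
      intro p
      by_cases hex : ∃ β, ∃ hb : β < o, ordOf (MA P β p) = (β : WithTop Ordinal)
      · obtain ⟨β, hb, hord⟩ := hex
        left
        rw [inp_desc p β hb hord]
        show ordOf (MA P β p) < (o : WithTop Ordinal)
        rw [hord]
        exact_mod_cast hb
      · exact Or.inr (inp_desc' p hex)
    -- inp has no value of order in `[β+1, o)` missing below: level agreement with each stage
    have agrγ : ∀ γ (hγ : γ < o), AGR (Ord1.succ ⟨γ, lt_trans hγ h⟩) (inp P o) (MA P γ) := by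
      intro γ hγ
      have d1 : ∀ p v, inp P o p = v → ∀ σ : Ordinal, σ ≤ γ →
          ordOf v = (σ : WithTop Ordinal) → MA P γ p = v := by
        intro p v hv σ hσγ hσ
        by_cases hex : ∃ β, ∃ hb : β < o, ordOf (MA P β p) = (β : WithTop Ordinal)
        · obtain ⟨β, hb, hord⟩ := hex
          have hv' : inp P o p = MA P β p := inp_desc p β hb hord
          have hβσ : β = σ := by
            rw [hv] at hv'
            rw [← hv', hσ] at hord
            exact (WithTop.coe_inj.1 hord).symm
          subst hβσ
          rcases lt_or_eq_of_le hσγ with hlt2 | rfl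
          · rw [(IH γ hγ (lt_trans hγ h)).2.1 β hlt2 p hord.le, ← hv', hv]
          · rw [← hv', hv]
        · rw [inp_desc' p hex] at hv
          rw [← hv] at hσ
          rw [show ordOf (TV.F ⟨o, h⟩) = (o : WithTop Ordinal) from rfl] at hσ
          have heqσ : o = σ := WithTop.coe_inj.1 hσ
          have hσo : σ < o := lt_of_le_of_lt hσγ hγ
          rw [← heqσ] at hσo
          exact absurd hσo (lt_irrefl o)
      have d2 : ∀ p v, MA P γ p = v → ∀ σ : Ordinal, σ ≤ γ →
          ordOf v = (σ : WithTop Ordinal) → inp P o p = v := by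
        intro p v hv σ hσγ hσ
        have h1 := IHc γ σ hσγ hγ p (by rw [hv, hσ])
        have hord : ordOf (MA P σ p) = (σ : WithTop Ordinal) := by rw [h1.2, hv, hσ]
        rw [inp_desc p σ (lt_of_le_of_lt hσγ hγ) hord, ← h1.1, hv]
      intro β hβ
      have hβγ : β.1 ≤ γ := by
        have := Ord1.lt_succ_iff.1 hβ
        exact_mod_cast this
      constructor
      · ext p
        show inp P o p = TV.T β ↔ MA P γ p = TV.T β
        exact ⟨fun hp => d1 p _ hp β.1 hβγ rfl, fun hp => d2 p _ hp β.1 hβγ rfl⟩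
      · ext p
        show inp P o p = TV.F β ↔ MA P γ p = TV.F β
        exact ⟨fun hp => d1 p _ hp β.1 hβγ rfl, fun hp => d2 p _ hp β.1 hβγ rfl⟩
    have hInpO : Inp P ⟨o, h⟩ (inp P o) := by
      refine ⟨inp_shape, ?_, ?_⟩
      · -- settled atoms are fixed
        intro p hp
        obtain ⟨β, hb, hord⟩ : ∃ β, ∃ hb : β < o, ordOf (MA P β p) = (β : WithTop Ordinal) := by
          by_contra hnex
          rw [inp_desc' p hnex] at hp
          exact not_oLT_F_self hp
        have hv : inp P o p = MA P β p := inp_desc p β hb hord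
        have hβω : β < ω₁ := lt_trans hb h
        have hfix : TP P (MA P β) p = MA P β p :=
          (hMAInp β hb hβω).2.1 p (by rw [oLT_succ_iff]; exact hord.le)
        have htr := TP_transfer (agrγ β hb).symm hfix (by rw [oLT_succ_iff]; exact hord.le)
        rw [htr, hv]
      · -- unsettled atoms produce no small values
        intro p hp hlt
        rcases oLT_iff.1 hlt with ⟨β, hβo, hval⟩
        have hβo' : β.1 < o := hβo
        have hβω : β < ω₁ := β.2
        have hord : ordOf (TP P (inp P o) p) = (β.1 : WithTop Ordinal) := by
          rcases hval with hv | hv <;> rw [hv] <;> rfl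
        have hβeq : (⟨β.1, lt_trans hβo' h⟩ : Ord1) = β := Subtype.ext rfl
        have htr : TP P (MA P β.1) p = TP P (inp P o) p := by
          refine TP_transfer (P := P) (agrγ β.1 hβo') rfl ?_
          rw [oLT_succ_iff, hord]
        -- p is unsettled at stage β
        have hMAβ : MA P β.1 p = TV.F (Ord1.succ ⟨β.1, lt_trans hβo' h⟩) := by
          rcases (hMAInp β.1 hβo' (lt_trans hβo' h)).1 p with hs | hF
          · exfalso
            rw [oLT_succ_iff] at hs
            obtain ⟨σ, hσβ, hσeq⟩ := ordOf_le_exists hs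
            have h1 := IHc β.1 σ hσβ hβo' p hσeq.le
            have hordσ : ordOf (MA P σ p) = (σ : WithTop Ordinal) := by rw [h1.2, hσeq]
            have := inp_desc p σ (lt_of_le_of_lt hσβ hβo') hordσ
            rw [hp] at this
            have : ordOf (TV.F (⟨o, h⟩ : Ord1)) = (σ : WithTop Ordinal) := by rw [this, hordσ]
            rw [show ordOf (TV.F (⟨o, h⟩ : Ord1)) = (o : WithTop Ordinal) from rfl] at this
            have heqσ : o = σ := WithTop.coe_inj.1 this
            have hσo : σ < o := lt_of_le_of_lt hσβ hβo'
            rw [← heqσ] at hσo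
            exact absurd hσo (lt_irrefl o)
          · exact hF
        refine (hMAInp β.1 hβo' (lt_trans hβo' h)).2.2 p hMAβ ?_
        rw [htr, oLT_succ_iff, hord]
    have hMAo : MA P o = TPomega P ⟨o, h⟩ (inp P o) := MA_eq P h
    refine ⟨hInpO, ?_, ?_⟩
    · -- C1
      intro γ hγ p hp
      obtain ⟨σ, hσγ, hσeq⟩ := ordOf_le_exists hp
      have h1 := IHc γ σ hσγ hγ p (by rw [hσeq])
      have hordσ : ordOf (MA P σ p) = (σ : WithTop Ordinal) := by rw [h1.2, hσeq]
      have hv : inp P o p = MA P σ p := inp_desc p σ (lt_of_le_of_lt hσγ hγ) hordσ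
      have hset : oLT (inp P o p) ⟨o, h⟩ := by
        show ordOf (inp P o p) < (o : WithTop Ordinal)
        rw [hv, hordσ]
        exact_mod_cast lt_of_le_of_lt hσγ hγ
      rw [hMAo, TPomega_settled hset, hv, ← h1.1]
    · -- C2
      intro γ hγ p hp
      rcases hInpO.1 p with hs | hF
      · rw [hMAo, TPomega_settled hs] at hp
        obtain ⟨σ, hσγ, hσeq⟩ := ordOf_le_exists hp
        obtain ⟨β, hb, hord⟩ : ∃ β, ∃ hb : β < o, ordOf (MA P β p) = (β : WithTop Ordinal) := by
          by_contra hnex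
          rw [inp_desc' p hnex] at hp
          have h2 : (o : WithTop Ordinal) ≤ (γ : WithTop Ordinal) := hp
          exact absurd (lt_of_le_of_lt (by exact_mod_cast h2) hγ) (lt_irrefl o)
        have hv : inp P o p = MA P β p := inp_desc p β hb hord
        have hβγ : β ≤ γ := by
          rw [hv, hord] at hp
          exact_mod_cast hp
        have h2 : MA P γ p = MA P β p := by
          rcases lt_or_eq_of_le hβγ with hlt2 | rfl
          · exact (IH γ hγ (lt_trans hγ h)).2.1 β hlt2 p hord.le
          · rfl
        rw [h2, hord]
        exact_mod_cast hβγ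
      · exfalso
        have hno : ¬ oLT (MA P o p) ⟨o, h⟩ := by
          rw [hMAo]
          exact TPomega_sh.2 p hF
        refine hno ?_
        show ordOf (MA P o p) < (o : WithTop Ordinal)
        exact lt_of_le_of_lt hp (by exact_mod_cast hγ)

-- ===== corollaries of the master theorem =====
lemma inp_Inp (P : Program) (α : Ord1) : Inp P α (inp P α.1) := by
  have := (master P α.1 α.2).1
  rwa [Subtype.eta] at this

lemma MA_Inp (P : Program) (α : Ord1) : Inp P α.succ (TPomega P α (inp P α.1)) := by
  have := stage_fix (inp_Inp P α)
  exact this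

lemma MA_TPomega (P : Program) (α : Ord1) : MA P α.1 = TPomega P α (inp P α.1) := by
  have := MA_eq P α.2
  rwa [Subtype.eta] at this

lemma MA_Inp' (P : Program) (α : Ord1) : Inp P α.succ (MA P α.1) := by
  rw [MA_TPomega]; exact MA_Inp P α

lemma MA_C1 (P : Program) {o : Ordinal.{0}} (h : o < ω₁) : C1 P o := (master P o h).2.1

lemma MA_coh (P : Program) {γ o : Ordinal.{0}} (ho : o < ω₁) (hγo : γ ≤ o) {p : ℕ}
    (hp : ordOf (MA P o p) ≤ (γ : WithTop Ordinal)) :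
    MA P o p = MA P γ p ∧ ordOf (MA P γ p) = ordOf (MA P o p) := by
  rcases lt_or_eq_of_le hγo with hlt | rfl
  · have h2 := (master P o ho).2.2 γ hlt p hp
    have h1 := (master P o ho).2.1 γ hlt p h2
    exact ⟨h1, by rw [h1]⟩
  · exact ⟨rfl, rfl⟩

lemma ordOf_eq_cases {v : TV} {a : Ord1} (h : ordOf v = (a.1 : WithTop Ordinal)) :
    v = TV.F a ∨ v = TV.T a := by
  rcases TV.casesOn' v with ⟨b, rfl⟩ | rfl | ⟨b, rfl⟩
  · rw [ordOf_F] at h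
    exact Or.inl (by rw [show b = a from Subtype.ext (by exact_mod_cast h)])
  · rw [ordOf_Z] at h; exact absurd h.symm (by simp)
  · rw [ordOf_T] at h
    exact Or.inr (by rw [show b = a from Subtype.ext (by exact_mod_cast h)])

-- ===== existence of the depth =====
lemma exists_isDepth (P : Program) : ∃ δ : Ord1, isDepth P δ := by
  classical
  set A : Set Ord1 := {γ | (level (Mα P γ) (TV.T γ)).Nonempty ∨ (level (Mα P γ) (TV.F γ)).Nonempty}
    with hA
  -- each element of A consumes an atom
  have hwit : ∀ γ ∈ A, ∃ p : ℕ, ordOf (MA P γ.1 p) = (γ.1 : WithTop Ordinal) := by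
    rintro γ (⟨p, hp⟩ | ⟨p, hp⟩)
    · exact ⟨p, by rw [show MA P γ.1 p = TV.T γ from hp]; rfl⟩
    · exact ⟨p, by rw [show MA P γ.1 p = TV.F γ from hp]; rfl⟩
  have hAcomp : ∃ δ : Ord1, δ ∉ A := by
    by_contra hc
    push_neg at hc
    -- build an injection from Ord1 into ℕ
    have hinj : Function.Injective (fun γ : Ord1 => (ULift.up ((hwit γ (hc γ)).choose) : ULift.{1} ℕ)) := by
      intro γ1 γ2 he
      have he' : (hwit γ1 (hc γ1)).choose = (hwit γ2 (hc γ2)).choose := congrArg ULift.down he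
      by_contra hne
      rcases lt_or_gt_of_ne (Subtype.coe_ne_coe.2 hne) with hlt | hlt
      · have h1 := (hwit γ1 (hc γ1)).choose_spec
        have h2 := (hwit γ2 (hc γ2)).choose_spec
        rw [he'] at h1
        have hp := MA_C1 P γ2.2 γ1.1 hlt _ h1.le
        rw [hp, h1] at h2
        exact absurd (WithTop.coe_inj.1 h2) (ne_of_lt hlt)
      · have h1 := (hwit γ1 (hc γ1)).choose_spec
        have h2 := (hwit γ2 (hc γ2)).choose_spec
        rw [← he'] at h2
        have hp := MA_C1 P γ1.2 γ2.1 hlt _ h2.le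
        rw [hp, h2] at h1
        exact absurd (WithTop.coe_inj.1 h1) (ne_of_lt hlt)
    have hcount : Cardinal.mk Ord1 ≤ Cardinal.lift.{1,0} (Cardinal.aleph0 : Cardinal.{0}) := by
      have h0 := Cardinal.mk_le_of_injective hinj
      rwa [Cardinal.mk_uLift, Cardinal.mk_nat] at h0
    have hcard : Cardinal.mk Ord1 = Cardinal.lift.{1,0} ((Cardinal.aleph 1 : Cardinal.{0})) := by
      have h1 : Cardinal.mk (Set.Iio (ω₁ : Ordinal.{0})) =
          Cardinal.lift.{1,0} ((ω₁ : Ordinal.{0}).card) := Ordinal.mk_Iio_ordinal _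
      rw [Ordinal.card_omega] at h1
      exact h1
    rw [hcard] at hcount
    exact absurd (Cardinal.lift_le.1 hcount) (not_le_of_gt Cardinal.aleph0_lt_aleph_one)
  obtain ⟨δ0, hδ0⟩ := hAcomp
  set B : Set Ordinal.{0} := {x | ∃ hx : x < ω₁, (⟨x, hx⟩ : Ord1) ∉ A} with hB
  have hBne : B.Nonempty := ⟨δ0.1, δ0.2, by rwa [Subtype.eta]⟩
  obtain ⟨hmx, hmA⟩ := (Ordinal.lt_wf.min_mem B hBne : WellFounded.min Ordinal.lt_wf B hBne ∈ B)
  refine ⟨⟨WellFounded.min Ordinal.lt_wf B hBne, hmx⟩, ?_, ?_⟩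
  · constructor
    · by_contra hne
      exact hmA (Or.inl (Set.nonempty_iff_ne_empty.2 hne))
    · by_contra hne
      exact hmA (Or.inr (Set.nonempty_iff_ne_empty.2 hne))
  · intro β hβ
    have hβB : β.1 ∉ B := fun hmem =>
      Ordinal.lt_wf.not_lt_min B hmem hβ
    have hβA : β ∈ A := by
      by_contra hc
      exact hβB ⟨β.2, by rwa [Subtype.eta]⟩
    rcases hβA with h1 | h1
    · exact Or.inl (Set.nonempty_iff_ne_empty.1 h1)
    · exact Or.inr (Set.nonempty_iff_ne_empty.1 h1)

lemma depth_spec (P : Program) : isDepth P (depth P) := by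
  rw [depth, dif_pos (exists_isDepth P)]
  exact (exists_isDepth P).choose_spec

-- ===== properties of the minimum model =====
section MPsec
variable (P : Program)

lemma Mδ_cases : ∀ p, oLT (MA P (depth P).1 p) (depth P) ∨
    MA P (depth P).1 p = TV.F (Ord1.succ (depth P)) := by
  intro p
  rcases (MA_Inp' P (depth P)).1 p with hs | hF
  · rw [oLT_succ_iff] at hs
    rcases lt_or_eq_of_le hs with hlt | heq
    · exact Or.inl hlt
    · exfalso
      rcases ordOf_eq_cases heq with hv | hv
      · exact absurd (show p ∈ level (Mα P (depth P)) (TV.F (depth P)) from hv)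
          (by rw [(depth_spec P).1.2]; exact Set.notMem_empty p)
      · exact absurd (show p ∈ level (Mα P (depth P)) (TV.T (depth P)) from hv)
          (by rw [(depth_spec P).1.1]; exact Set.notMem_empty p)
  · exact Or.inr hF

lemma MP_eq : ∀ p, (oLT (MA P (depth P).1 p) (depth P) ∧ MP P p = MA P (depth P).1 p) ∨
    (MA P (depth P).1 p = TV.F (Ord1.succ (depth P)) ∧ MP P p = TV.Z) := by
  intro p
  rcases Mδ_cases P p with hs | hF
  · exact Or.inl ⟨hs, by
      rw [MP, if_pos (show ordOf (Mα P (depth P) p) < ((depth P).1 : WithTop Ordinal) from hs)]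
      rfl⟩
  · refine Or.inr ⟨hF, ?_⟩
    rw [MP, if_neg ?_]
    show ¬ ordOf (Mα P (depth P) p) < ((depth P).1 : WithTop Ordinal)
    rw [show Mα P (depth P) p = TV.F (Ord1.succ (depth P)) from hF, ordOf_F]
    intro hlt
    have h2 : (Ord1.succ (depth P)).1 < (depth P).1 := by exact_mod_cast hlt
    exact absurd h2 (not_lt_of_ge (Ordinal.le_add_right _ _))
  
lemma MP_shape : ∀ p, oLT (MP P p) (depth P) ∨ MP P p = TV.Z := by
  intro p
  rcases MP_eq P p with ⟨hs, he⟩ | ⟨-, he⟩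
  · exact Or.inl (he ▸ hs)
  · exact Or.inr he

lemma MP_level_empty : ∀ γ : Ord1, depth P ≤ γ →
    level (MP P) (TV.T γ) = ∅ ∧ level (MP P) (TV.F γ) = ∅ := by
  intro γ hγ
  constructor <;> ext p <;> simp only [Set.mem_empty_iff_false, iff_false]
  · intro hp
    have hp' : MP P p = TV.T γ := hp
    rcases MP_shape P p with hs | hZ
    · rw [hp'] at hs
      exact absurd (lt_of_le_of_lt (show (γ.1 : WithTop Ordinal) ≥ ((depth P).1 : WithTop Ordinal)
        from by exact_mod_cast hγ) hs) (lt_irrefl _)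
    · rw [hp'] at hZ; exact Z_ne_T hZ.symm
  · intro hp
    have hp' : MP P p = TV.F γ := hp
    rcases MP_shape P p with hs | hZ
    · rw [hp'] at hs
      exact absurd (lt_of_le_of_lt (show (γ.1 : WithTop Ordinal) ≥ ((depth P).1 : WithTop Ordinal)
        from by exact_mod_cast hγ) hs) (lt_irrefl _)
    · rw [hp'] at hZ; exact F_ne_Z hZ

lemma AGR_MP_Mδ : AGR (Ord1.succ (depth P)) (MP P) (MA P (depth P).1) := by
  intro β hβ
  have hβδ : β ≤ depth P := Ord1.lt_succ_iff.1 hβ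
  constructor
  · ext p
    show MP P p = TV.T β ↔ MA P (depth P).1 p = TV.T β
    constructor
    · intro hp
      rcases MP_eq P p with ⟨-, he⟩ | ⟨-, he⟩
      · rw [← he]; exact hp
      · rw [he] at hp; exact absurd hp Z_ne_T
    · intro hp
      rcases MP_eq P p with ⟨-, he⟩ | ⟨hF, -⟩
      · rw [he]; exact hp
      · rw [hF] at hp; exact absurd hp F_ne_T
  · ext p
    show MP P p = TV.F β ↔ MA P (depth P).1 p = TV.F β
    constructor
    · intro hp
      rcases MP_eq P p with ⟨-, he⟩ | ⟨-, he⟩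
      · rw [← he]; exact hp
      · rw [he] at hp; exact absurd hp.symm F_ne_Z
    · intro hp
      rcases MP_eq P p with ⟨-, he⟩ | ⟨hF, -⟩
      · rw [he]; exact hp
      · rw [hF] at hp
        have heq := F_inj.1 hp
        have : β < Ord1.succ (depth P) := hβ
        rw [← heq] at this
        exact absurd this (lt_irrefl _)

lemma AGR_MA_MA (α : Ord1) {o : Ordinal.{0}} (ho : o < ω₁) (hαo : α.1 ≤ o) :
    AGR α (MA P α.1) (MA P o) := by
  intro β hβ
  have hβα : β.1 < α.1 := hβ
  have key : ∀ p v, ordOf v = (β.1 : WithTop Ordinal) → (MA P α.1 p = v ↔ MA P o p = v) := by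
    intro p v hv
    constructor
    · intro hp
      rcases lt_or_eq_of_le hαo with hlt | rfl
      · rw [MA_C1 P ho α.1 hlt p (by rw [hp, hv]; exact_mod_cast hβα.le), hp]
      · exact hp
    · intro hp
      rw [(MA_coh P ho hαo (by rw [hp, hv]; exact_mod_cast hβα.le)).1] at hp
      exact hp
  exact ⟨Set.ext fun p => key p (TV.T β) rfl, Set.ext fun p => key p (TV.F β) rfl⟩

lemma AGR_inp_MP (α : Ord1) (hαδ : α ≤ depth P) : AGR α (inp P α.1) (MP P) := by
  have h1 : AGR α (inp P α.1) (MA P α.1) := by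
    rw [MA_TPomega]
    exact TPomega_agr (inp_Inp P α).1
  have h2 : AGR α (MA P α.1) (MA P (depth P).1) :=
    AGR_MA_MA P α (depth P).2 (by exact_mod_cast hαδ)
  have h3 : AGR α (MA P (depth P).1) (MP P) :=
    (AGR_MP_Mδ P).symm.mono (le_trans hαδ (Ord1.lt_succ_self (depth P)).le)
  exact (h1.trans h2).trans h3
end MPsec

lemma oLT_T_iff {a b : Ord1} : oLT (TV.T a) b ↔ a < b := by
  show ordOf (TV.T a) < (b.1 : WithTop Ordinal) ↔ a.1 < b.1
  rw [ordOf_T, WithTop.coe_lt_coe]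

lemma oLT_F_iff {a b : Ord1} : oLT (TV.F a) b ↔ a < b := by
  show ordOf (TV.F a) < (b.1 : WithTop Ordinal) ↔ a.1 < b.1
  rw [ordOf_F, WithTop.coe_lt_coe]

lemma Z_lt_iff {v : TV} : TV.Z < v ↔ ∃ a, v = TV.T a := by
  constructor
  · intro h
    rcases TV.casesOn' v with ⟨b, rfl⟩ | rfl | ⟨b, rfl⟩
    · exact absurd h (not_lt_of_ge F_le_Z)
    · exact absurd h (lt_irrefl _)
    · exact ⟨b, rfl⟩
  · rintro ⟨a, rfl⟩; exact Z_lt_T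

section MPfix
variable (P : Program)

lemma lit_bound_T {l : Lit} {a : Ord1} (h : evalLit (MP P) l = TV.T a) : a ≤ depth P := by
  cases l with
  | pos q =>
    rw [evalLit_pos] at h
    rcases MP_shape P q with hs | hZ
    · rw [h] at hs
      exact (oLT_T_iff.1 hs).le
    · rw [h] at hZ; exact absurd hZ Z_ne_T.symm
  | neg q =>
    rw [evalLit_neg] at h
    rcases TV.casesOn' (MP P q) with ⟨c, hc⟩ | hc | ⟨c, hc⟩ <;> rw [hc] at h <;>
      simp only [negv_F, negv_Z, negv_T] at h
    · rcases MP_shape P q with hs | hZ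
      · rw [hc] at hs
        rw [← T_inj.1 h]
        exact Ord1.succ_le_iff.2 (oLT_F_iff.1 hs)
      · rw [hc] at hZ; exact absurd hZ F_ne_Z
    · exact absurd h Z_ne_T
    · exact absurd h F_ne_T
  | tt =>
    rw [evalLit_tt] at h
    rw [← T_inj.1 h]
    exact Ordinal.zero_le _
  | ff => rw [evalLit_ff] at h; exact absurd h F_ne_T

lemma lit_bound_F {l : Lit} {a : Ord1} (h : evalLit (MP P) l = TV.F a) : a ≤ depth P := by
  cases l with
  | pos q =>
    rw [evalLit_pos] at h
    rcases MP_shape P q with hs | hZ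
    · rw [h] at hs
      exact (oLT_F_iff.1 hs).le
    · rw [h] at hZ; exact absurd hZ F_ne_Z
  | neg q =>
    rw [evalLit_neg] at h
    rcases TV.casesOn' (MP P q) with ⟨c, hc⟩ | hc | ⟨c, hc⟩ <;> rw [hc] at h <;>
      simp only [negv_F, negv_Z, negv_T] at h
    · exact absurd h F_ne_T.symm
    · exact absurd h F_ne_Z.symm
    · rcases MP_shape P q with hs | hZ
      · rw [hc] at hs
        rw [← F_inj.1 h]
        exact Ord1.succ_le_iff.2 (oLT_T_iff.1 hs)
      · rw [hc] at hZ; exact absurd hZ Z_ne_T.symm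
  | tt => rw [evalLit_tt] at h; exact absurd h F_ne_T.symm
  | ff =>
    rw [evalLit_ff] at h
    rw [← F_inj.1 h]
    exact Ordinal.zero_le _

lemma body_bound_T {b : List Lit} {a : Ord1} (h : evalBody (MP P) b = TV.T a) :
    a ≤ depth P := by
  rcases body_attained (I := MP P) b with h' | ⟨l, hl, h'⟩
  · rw [h] at h'
    rw [T_inj.1 h']
    exact Ordinal.zero_le _
  · exact lit_bound_T P (h'.symm.trans h)

lemma body_bound_F {b : List Lit} {a : Ord1} (h : evalBody (MP P) b = TV.F a) :
    a ≤ depth P := by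
  rcases body_attained (I := MP P) b with h' | ⟨l, hl, h'⟩
  · rw [h] at h'; exact absurd h' F_ne_T
  · exact lit_bound_F P (h'.symm.trans h)

theorem TP_MP_fix : TP P (MP P) = MP P := by
  funext p
  rcases MP_eq P p with ⟨hs, he⟩ | ⟨hF, he⟩
  · have hsucc : oLT (MA P (depth P).1 p) (Ord1.succ (depth P)) :=
      oLT_of_lt hs (Ord1.lt_succ_self (depth P)).le
    have hfix : TP P (MA P (depth P).1) p = MA P (depth P).1 p :=
      (MA_Inp' P (depth P)).2.1 p hsucc
    have htr : TP P (MP P) p = MA P (depth P).1 p :=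
      TP_transfer (AGR_MP_Mδ P).symm hfix hsucc
    rw [htr, he]
  · have hno : ¬ oLT (TP P (MA P (depth P).1) p) (Ord1.succ (depth P)) :=
      (MA_Inp' P (depth P)).2.2 p hF
    have hno' : ¬ oLT (TP P (MP P) p) (Ord1.succ (depth P)) :=
      TP_not_oLT (AGR_MP_Mδ P).symm hno
    rw [he]
    -- no body can be true
    have claim1 : ∀ c ∈ P, c.head = p → evalBody (MP P) c.body ≤ TV.Z := by
      intro c hc hh
      by_contra hgt
      rcases Z_lt_iff.1 (lt_of_not_ge hgt) with ⟨a, ha⟩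
      have haδ : a ≤ depth P := body_bound_T P ha
      have h1 : TV.T a ≤ TP P (MP P) p := ha ▸ body_le_TP hc hh
      rcases T_le_iff.1 h1 with ⟨c', hc', hval⟩
      refine hno' ?_
      rw [hval]
      exact oLT_iff.2 ⟨c', Ord1.lt_succ_iff.2 (le_trans hc' haδ), Or.inr rfl⟩
    by_cases hZ : ∃ c, c ∈ P ∧ c.head = p ∧ evalBody (MP P) c.body = TV.Z
    · obtain ⟨c, hc, hh, hb⟩ := hZ
      exact le_antisymm (TP_le_of_bodies claim1) (hb ▸ body_le_TP hc hh)
    · exfalso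
      have claim2 : ∀ c ∈ P, c.head = p → evalBody (MP P) c.body ≤ TV.F (depth P) := by
        intro c hc hh
        have h1 := claim1 c hc hh
        rcases lt_or_eq_of_le h1 with hlt | heq
        · rcases TV.casesOn' (evalBody (MP P) c.body) with ⟨b, hb⟩ | hb | ⟨b, hb⟩
          · rw [hb]
            exact F_le_F.2 (body_bound_F P hb)
          · exact absurd hb (fun hb' => hZ ⟨c, hc, hh, hb'⟩)
          · rw [hb] at hlt
            exact absurd hlt (not_lt_of_ge (le_of_lt Z_lt_T))
        · exact absurd heq (fun hb' => hZ ⟨c, hc, hh, hb'⟩)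
      have h2 : TP P (MP P) p ≤ TV.F (depth P) := TP_le_of_bodies claim2
      rcases le_F_iff.1 h2 with ⟨b, hb, hval⟩
      refine hno' ?_
      rw [hval]
      exact oLT_iff.2 ⟨b, Ord1.lt_succ_iff.2 hb, Or.inl rfl⟩
end MPfix

-- ===== minimality =====
section Min
variable (P : Program) {N : Interp}

lemma coreT (hN : isModel P N) {α : Ord1} (hAGR : AGR α (MP P) N) :
    level (MP P) (TV.T α) ⊆ level N (TV.T α) := by
  intro p hp
  have hp' : MP P p = TV.T α := hp
  have hαδ : α < depth P := by
    rcases MP_shape P p with hs | hZ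
    · rw [hp'] at hs; exact oLT_T_iff.1 hs
    · rw [hp'] at hZ; exact absurd hZ Z_ne_T.symm
  have hMδ : MA P (depth P).1 p = TV.T α := by
    rcases MP_eq P p with ⟨-, he⟩ | ⟨-, he⟩
    · rw [← he]; exact hp'
    · rw [he] at hp'; exact absurd hp' Z_ne_T
  have hMα : MA P α.1 p = TV.T α := by
    have hc := MA_coh P (depth P).2 (show α.1 ≤ (depth P).1 from hαδ.le) (p := p)
      (by rw [hMδ, ordOf_T])
    rw [← hc.1, hMδ]
  have hInp := inp_Inp P α
  have hagrN : AGR α (inp P α.1) N := (AGR_inp_MP P α hαδ.le).trans hAGR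
  obtain ⟨n0, hn0⟩ : ∃ n, (TP P)^[n] (inp P α.1) p = TV.T α := by
    have h2 : TPomega P α (inp P α.1) p = TV.T α := by rw [← MA_TPomega]; exact hMα
    rcases TPomega_cases P α (inp P α.1) p with ⟨hs2, he2⟩ | ⟨-, hTc | hFc | hFc'⟩
    · rw [he2] at h2; rw [h2] at hs2; exact absurd hs2 not_oLT_T_self
    · exact hTc.1
    · rw [hFc.2] at h2; exact absurd h2 F_ne_T
    · rw [hFc'.2.2] at h2; exact absurd h2 F_ne_T
  have base : ∀ q, TV.T α ≤ inp P α.1 q → oLT (inp P α.1 q) α → TV.T α ≤ N q := by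
    intro q hq hset
    rcases T_le_iff.1 hq with ⟨c, hcα, hval⟩
    rw [hval] at hset
    rw [hagrN.T_eq (oLT_T_iff.1 hset) hval]
    exact T_le_T.2 hcα
  have H : ∀ n q, TV.T α ≤ (TP P)^[n] (inp P α.1) q → TV.T α ≤ N q := by
    intro n
    induction n with
    | zero =>
      intro q hq
      rw [Function.iterate_zero_apply] at hq
      rcases hInp.1 q with hs2 | hu
      · exact base q hq hs2
      · rw [hu] at hq; exact absurd hq not_T_le_F
    | succ n ih =>
      intro q hq
      rcases hInp.1 q with hs2 | hu
      · have he := (iter_sh hInp (n+1)).1 q hs2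
        rw [he] at hq
        exact base q hq hs2
      · have hnot := (iter_sh hInp (n+1)).2 q hu
        have hval : (TP P)^[n+1] (inp P α.1) q = TV.T α := eq_T_of_le_not_oLT hq hnot
        have hq' : TV.T α ≤ TP P ((TP P)^[n] (inp P α.1)) q := by
          rw [← Function.iterate_succ_apply' (TP P) n (inp P α.1)]
          exact hval.ge
        obtain ⟨w, hw, hwle⟩ := exists_T_le_of_T_le_lub (S := _) hq'
        obtain ⟨c, hc, hh, hbody⟩ := hw
        have hkey : TV.T α ≤ evalBody N c.body :=
          keyT ((iter_agr hInp n).symm.trans hagrN)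
            (fun q' _ hq'2 => ih q' hq'2.ge) (hbody ▸ hwle)
        calc TV.T α ≤ evalBody N c.body := hkey
          _ ≤ TP P N q := body_le_TP hc hh
          _ ≤ N q := isModel_iff.1 hN q
  have h3 : TV.T α ≤ N p := H n0 p hn0.ge
  rcases T_le_iff.1 h3 with ⟨c, hcα, hval⟩
  rcases lt_or_eq_of_le hcα with hlt | rfl
  · exfalso
    have := hAGR.symm.T_eq hlt hval
    rw [hp'] at this
    exact absurd (T_inj.1 this) (ne_of_lt hlt).symm
  · exact hval

lemma coreF (hN : isModel P N) {α : Ord1} (hAGR : AGR α (MP P) N) :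
    level N (TV.F α) ⊆ level (MP P) (TV.F α) := by
  intro p hp
  have hp' : N p = TV.F α := hp
  by_cases hαδ : α < depth P
  · -- α below the depth
    have hInp := inp_Inp P α
    have hagrN : AGR α (inp P α.1) N := (AGR_inp_MP P α hαδ.le).trans hAGR
    have hunset : ∀ q, N q = TV.F α → inp P α.1 q = TV.F α := by
      intro q hq
      rcases hInp.1 q with hs2 | hu
      · exfalso
        rcases oLT_iff.1 hs2 with ⟨c, hcα, hv | hv⟩
        · have := hagrN.F_eq hcα hv
          rw [hq] at this
          exact absurd (F_inj.1 this) (ne_of_lt hcα).symm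
        · have := hagrN.T_eq hcα hv
          rw [hq] at this
          exact absurd this F_ne_T
      · exact hu
    have H : ∀ n q, N q = TV.F α → (TP P)^[n] (inp P α.1) q = TV.F α := by
      intro n
      induction n with
      | zero =>
        intro q hq
        rw [Function.iterate_zero_apply]
        exact hunset q hq
      | succ n ih =>
        intro q hq
        have hle : (TP P)^[n+1] (inp P α.1) q ≤ TV.F α := by
          rw [Function.iterate_succ_apply']
          refine TP_le_of_bodies fun c hc hh => ?_
          have hbN : evalBody N c.body ≤ TV.F α := by
            refine le_trans (body_le_TP hc hh) ?_
            rw [← hq]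
            exact isModel_iff.1 hN q
          exact keyF le_rfl (hagrN.symm.trans (iter_agr hInp n))
            (fun γ h1 h2 => absurd (lt_of_le_of_lt h1 h2) (lt_irrefl _))
            (fun q' _ hq' => (ih q' hq').le) hbN
        exact eq_F_of_le_not_oLT hle ((iter_sh hInp (n+1)).2 q (hunset q hq))
    have hMα : MA P α.1 p = TV.F α := by
      rw [MA_TPomega]
      exact TPomega_F (by rw [hunset p hp']; exact not_oLT_F_self) (fun n => H n p hp')
    have hcoh : MA P (depth P).1 p = MA P α.1 p :=
      MA_C1 P (depth P).2 α.1 hαδ p (by rw [hMα, ordOf_F])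
    have hMδ : MA P (depth P).1 p = TV.F α := by rw [hcoh, hMα]
    show MP P p = TV.F α
    rcases MP_eq P p with ⟨-, he⟩ | ⟨hFδ, -⟩
    · rw [he, hMδ]
    · exfalso
      rw [hMδ] at hFδ
      have heq := F_inj.1 hFδ
      have : α < Ord1.succ (depth P) := lt_trans hαδ (Ord1.lt_succ_self _)
      rw [heq] at this
      exact absurd this (lt_irrefl _)
  · -- α at or above the depth : no model agreeing below can have `F α` atoms
    exfalso
    have hδα : depth P ≤ α := le_of_not_gt hαδ
    have hInp := inp_Inp P (depth P)
    have hagrN : AGR (depth P) (inp P (depth P).1) N :=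
      (AGR_inp_MP P (depth P) le_rfl).trans (hAGR.mono hδα)
    have hemp : ∀ γ : Ord1, depth P ≤ γ → γ < α →
        level N (TV.T γ) = ∅ ∧ level N (TV.F γ) = ∅ := by
      intro γ h1 h2
      have hlev := hAGR γ h2
      have h3 := MP_level_empty P γ h1
      exact ⟨by rw [← hlev.1]; exact h3.1, by rw [← hlev.2]; exact h3.2⟩
    have hunset : ∀ q, N q = TV.F α → inp P (depth P).1 q = TV.F (depth P) := by
      intro q hq
      rcases hInp.1 q with hs2 | hu
      · exfalso
        rcases oLT_iff.1 hs2 with ⟨c, hcδ, hv | hv⟩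
        · have := hagrN.F_eq hcδ hv
          rw [hq] at this
          have heq := F_inj.1 this
          exact absurd (lt_of_lt_of_le (heq ▸ hcδ) hδα) (lt_irrefl α)
        · have := hagrN.T_eq hcδ hv
          rw [hq] at this
          exact absurd this F_ne_T
      · exact hu
    have H : ∀ n q, N q = TV.F α → (TP P)^[n] (inp P (depth P).1) q = TV.F (depth P) := by
      intro n
      induction n with
      | zero =>
        intro q hq
        rw [Function.iterate_zero_apply]
        exact hunset q hq
      | succ n ih =>
        intro q hq
        have hle : (TP P)^[n+1] (inp P (depth P).1) q ≤ TV.F (depth P) := by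
          rw [Function.iterate_succ_apply']
          refine TP_le_of_bodies fun c hc hh => ?_
          have hbN : evalBody N c.body ≤ TV.F α := by
            refine le_trans (body_le_TP hc hh) ?_
            rw [← hq]
            exact isModel_iff.1 hN q
          exact keyF hδα (hagrN.symm.trans (iter_agr hInp n)) hemp
            (fun q' _ hq' => (ih q' hq').le) hbN
        exact eq_F_of_le_not_oLT hle ((iter_sh hInp (n+1)).2 q (hunset q hq))
    have hMδ2 : MA P (depth P).1 p = TV.F (depth P) := by
      rw [MA_TPomega]
      exact TPomega_F (by rw [hunset p hp']; exact not_oLT_F_self) (fun n => H n p hp')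
    exact absurd (show p ∈ level (Mα P (depth P)) (TV.F (depth P)) from hMδ2)
      (by rw [(depth_spec P).1.2]; exact Set.notMem_empty p)

theorem MP_least (hN : isModel P N) : sqleInf (MP P) N := by
  by_cases hW : ∃ x : Ordinal.{0}, ∃ hx : x < ω₁, ¬ eqA ⟨x, hx⟩ (MP P) N
  · right
    set W : Set Ordinal.{0} := {x | ∃ hx : x < ω₁, ¬ eqA ⟨x, hx⟩ (MP P) N} with hWdef
    have hWne : W.Nonempty := by
      obtain ⟨x, hx, hne⟩ := hW
      exact ⟨x, hx, hne⟩
    obtain ⟨hmx, hmne⟩ := (Ordinal.lt_wf.min_mem W hWne :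
      WellFounded.min Ordinal.lt_wf W hWne ∈ W)
    set m := WellFounded.min Ordinal.lt_wf W hWne with hm
    set α : Ord1 := ⟨m, hmx⟩ with hα
    have hmin : ∀ β : Ord1, β < α → eqA β (MP P) N := by
      intro β hβ
      by_contra hc
      exact Ordinal.lt_wf.not_lt_min W ⟨β.2, by rwa [Subtype.eta]⟩ hβ
    have hAGR : AGR α (MP P) N := fun β hβ => (hmin β hβ) β le_rfl
    have hT := coreT P hN hAGR
    have hF := coreF P hN hAGR
    have hdiff : ¬ (level (MP P) (TV.T α) = level N (TV.T α) ∧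
        level (MP P) (TV.F α) = level N (TV.F α)) := by
      intro hc
      refine hmne ?_
      intro β hβ
      rcases lt_or_eq_of_le hβ with hlt | rfl
      · exact (hmin β hlt) β le_rfl
      · exact hc
    refine ⟨α, hmin, ?_⟩
    by_cases hTd : level (MP P) (TV.T α) = level N (TV.T α)
    · have hFd : level (MP P) (TV.F α) ≠ level N (TV.F α) := fun hc => hdiff ⟨hTd, hc⟩
      exact Or.inr ⟨le_of_eq hTd, Set.ssubset_iff_subset_ne.2 ⟨hF, fun hc => hFd hc.symm⟩⟩
    · exact Or.inl ⟨Set.ssubset_iff_subset_ne.2 ⟨hT, hTd⟩, hF⟩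
  · left
    push_neg at hW
    have hall : ∀ α : Ord1, eqA α (MP P) N := by
      intro α
      have := hW α.1 α.2
      rwa [Subtype.eta] at this
    funext p
    rcases TV.casesOn' (MP P p) with ⟨b, hb⟩ | hb | ⟨b, hb⟩
    · have : p ∈ level N (TV.F b) := by
        rw [← ((hall b) b le_rfl).2]
        exact hb
      rw [hb, this]
    · rcases TV.casesOn' (N p) with ⟨b, hb'⟩ | hb' | ⟨b, hb'⟩
      · exfalso
        have : p ∈ level (MP P) (TV.F b) := by
          rw [((hall b) b le_rfl).2]
          exact hb'
        have h2 : MP P p = TV.F b := this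
        rw [hb] at h2
        exact F_ne_Z h2.symm
      · rw [hb, hb']
      · exfalso
        have : p ∈ level (MP P) (TV.T b) := by
          rw [((hall b) b le_rfl).1]
          exact hb'
        have h2 : MP P p = TV.T b := this
        rw [hb] at h2
        exact Z_ne_T h2
    · have : p ∈ level N (TV.T b) := by
        rw [← ((hall b) b le_rfl).1]
        exact hb
      rw [hb, this]
end Min

/-- `M_P` is the `⊑_∞`-least model of `P`, and also the `⊑_∞`-least fixpoint of `T_P`. -/
theorem MP_least_model_and_least_fixpoint (P : Program) :
    isModel P (MP P) ∧ (∀ N : Interp, isModel P N → sqleInf (MP P) N) ∧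
    TP P (MP P) = MP P ∧ (∀ I : Interp, TP P I = I → sqleInf (MP P) I) :=
  ⟨isModel_of_fixpoint (TP_MP_fix P), fun _ hN => MP_least P hN,
    TP_MP_fix P, fun _ hI => MP_least P (isModel_of_fixpoint hI)⟩

end IVS
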